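/- arXiv:2211.01610 — 5 statements merged into one kernel-verified Lean document; each statement's English description precedes it below -/
import Mathlib

section
/- Let Φ = f + g with f : ℝ^d → ℝ convex with L-Lipschitz gradient and g : ℝ^d → ℝ continuous convex, and let s > 0 with s ≤ 1/L. Then for all x, y ∈ ℝ^d, Φ(y − s·G_s(y)) ≤ Φ(x) + ⟨G_s(y), y − x⟩ − (s − s²L/2)·‖G_s(y)‖². -/
open scoped RealInnerProductSpace
open Set Filter Topology

section Aux

variable {E : Type*} [NormedAddCommGroup E] [InnerProductSpace ℝ E] [CompleteSpace E]

private lemma line_hasDerivAt {f : E → ℝ} {gr : E} {c : E} (h : HasGradientAt f gr c)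
    (x v : E) (t : ℝ) (hc : c = x + t • v) :
    HasDerivAt (fun t : ℝ => f (x + t • v)) ⟪gr, v⟫ t := by
  subst hc
  have hline : HasDerivAt (fun t : ℝ => x + t • v) v t := by
    simpa using ((hasDerivAt_id t).smul_const v).const_add x
  have := (h.hasFDerivAt.comp_hasDerivAt t hline)
  simp [InnerProductSpace.toDual_apply_apply] at this
  exact this

private lemma convex_grad_ineq {f : E → ℝ} (hf : ConvexOn ℝ Set.univ f)
    {x gx : E} (h : HasGradientAt f gx x) (y : E) :
    f x + ⟪gx, y - x⟫ ≤ f y := by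
  have hd : HasDerivAt (fun t : ℝ => f (x + t • (y - x))) ⟪gx, y - x⟫ 0 :=
    line_hasDerivAt h x (y - x) 0 (by simp)
  have hslope : Filter.Tendsto (slope (fun t : ℝ => f (x + t • (y - x))) 0)
      (𝓝[>] (0:ℝ)) (𝓝 ⟪gx, y - x⟫) :=
    (hasDerivAt_iff_tendsto_slope.1 hd).mono_left
      (nhdsWithin_mono 0 (fun t ht => ne_of_gt ht))
  have hev : ∀ᶠ t in 𝓝[>] (0:ℝ),
      slope (fun t : ℝ => f (x + t • (y - x))) 0 t ≤ f y - f x := by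
    filter_upwards [Ioc_mem_nhdsGT_of_mem (by simp : (0:ℝ) ∈ Ico (0:ℝ) 1)] with t ht
    have h1 : x + t • (y - x) = (1 - t) • x + t • y := by module
    have h2 : f (x + t • (y - x)) ≤ (1 - t) * f x + t * f y := by
      rw [h1]
      exact hf.2 (mem_univ x) (mem_univ y) (by linarith [ht.2]) (le_of_lt ht.1) (by ring)
    simp only [slope_def_field, zero_smul, add_zero, sub_zero]
    rw [div_le_iff₀ ht.1]
    nlinarith [ht.1]
  have := le_of_tendsto hslope hev
  linarith

private lemma descent_lemma {f : E → ℝ} (f' : E → E) (hf' : ∀ x, HasGradientAt f (f' x) x)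
    {L : ℝ} (hlip : ∀ x y, ‖f' x - f' y‖ ≤ L * ‖x - y‖) (x v : E) :
    f (x + v) ≤ f x + ⟪f' x, v⟫ + L / 2 * ‖v‖ ^ 2 := by
  set χ : ℝ → ℝ := fun t => L * t ^ 2 * ‖v‖ ^ 2 / 2 + t * ⟪f' x, v⟫ - f (x + t • v) with hχdef
  have hχ : ∀ t : ℝ, HasDerivAt χ (L * t * ‖v‖ ^ 2 + ⟪f' x, v⟫ - ⟪f' (x + t • v), v⟫) t := by
    intro t
    have h1 : HasDerivAt (fun t : ℝ => L * t ^ 2 * ‖v‖ ^ 2 / 2) (L * t * ‖v‖ ^ 2) t := by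
      have := (hasDerivAt_pow 2 t).const_mul L
      have := (this.mul_const (‖v‖ ^ 2)).div_const 2
      refine this.congr_deriv ?_
      ring
    have h2 : HasDerivAt (fun t : ℝ => t * ⟪f' x, v⟫) ⟪f' x, v⟫ t := by
      simpa using (hasDerivAt_id t).mul_const ⟪f' x, v⟫
    have h3 := line_hasDerivAt (hf' (x + t • v)) x v t rfl
    exact (h1.add h2).sub h3
  have hmono : MonotoneOn χ (Icc (0:ℝ) 1) := by
    apply monotoneOn_of_deriv_nonneg (convex_Icc 0 1)
    · exact (continuous_iff_continuousAt.2 fun t => (hχ t).continuousAt).continuousOn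
    · exact fun t _ => (hχ t).differentiableAt.differentiableWithinAt
    · intro t ht
      rw [interior_Icc] at ht
      rw [(hχ t).deriv]
      have hb : ⟪f' (x + t • v) - f' x, v⟫ ≤ ‖f' (x + t • v) - f' x‖ * ‖v‖ :=
        real_inner_le_norm _ _
      have hl : ‖f' (x + t • v) - f' x‖ ≤ L * ‖t • v‖ := by
        simpa using hlip (x + t • v) x
      have hn : ‖t • v‖ = t * ‖v‖ := by
        rw [norm_smul, Real.norm_eq_abs, abs_of_pos ht.1]
      rw [inner_sub_left] at hb
      rw [hn] at hl
      have hmul := mul_le_mul_of_nonneg_right hl (norm_nonneg v)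
      have hsq : ‖v‖ ^ 2 = ‖v‖ * ‖v‖ := pow_two ‖v‖
      nlinarith [hb, hmul]
  have h01 := hmono (left_mem_Icc.2 zero_le_one) (right_mem_Icc.2 zero_le_one) zero_le_one
  simp only [hχdef] at h01
  norm_num at h01
  linarith

private lemma prox_subgrad {g : E → ℝ} (hg : ConvexOn ℝ Set.univ g) {s : ℝ} (hs : 0 < s)
    {u p : E} (hmin : ∀ z, 1 / (2 * s) * ‖p - u‖ ^ 2 + g p ≤ 1 / (2 * s) * ‖z - u‖ ^ 2 + g z)
    (z : E) : g p + s⁻¹ * ⟪u - p, z - p⟫ ≤ g z := by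
  have key : ∀ t ∈ Ioc (0:ℝ) 1,
      g p + s⁻¹ * ⟪u - p, z - p⟫ ≤ g z + t / (2 * s) * ‖z - p‖ ^ 2 := by
    intro t ht
    have ht0 : (0:ℝ) < t := ht.1
    have h1 := hmin (p + t • (z - p))
    have hgc : g (p + t • (z - p)) ≤ (1 - t) * g p + t * g z := by
      have h1' : p + t • (z - p) = (1 - t) • p + t • z := by module
      rw [h1']
      exact hg.2 (mem_univ p) (mem_univ z) (by linarith [ht.2]) (le_of_lt ht0) (by ring)
    have hnorm : ‖p + t • (z - p) - u‖ ^ 2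
        = ‖p - u‖ ^ 2 + 2 * (t * ⟪p - u, z - p⟫) + t ^ 2 * ‖z - p‖ ^ 2 := by
      have he : p + t • (z - p) - u = (p - u) + t • (z - p) := by abel
      rw [he, norm_add_sq_real, real_inner_smul_right, norm_smul, Real.norm_eq_abs,
        abs_of_pos ht0, mul_pow]
    rw [hnorm] at h1
    have hexp : 1 / (2 * s) * (‖p - u‖ ^ 2 + 2 * (t * ⟪p - u, z - p⟫) + t ^ 2 * ‖z - p‖ ^ 2)
        = 1 / (2 * s) * ‖p - u‖ ^ 2 + t / s * ⟪p - u, z - p⟫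
          + t ^ 2 / (2 * s) * ‖z - p‖ ^ 2 := by
      field_simp
    rw [hexp] at h1
    have h2 : t * g p ≤ t * (s⁻¹ * ⟪p - u, z - p⟫ + t / (2 * s) * ‖z - p‖ ^ 2 + g z) := by
      have e1 : t * (s⁻¹ * ⟪p - u, z - p⟫ + t / (2 * s) * ‖z - p‖ ^ 2 + g z)
          = t / s * ⟪p - u, z - p⟫ + t ^ 2 / (2 * s) * ‖z - p‖ ^ 2 + t * g z := by
        field_simp
      rw [e1]; linarith
    have h3 := (mul_le_mul_iff_right₀ ht0).mp h2
    have hinner : ⟪u - p, z - p⟫ = -⟪p - u, z - p⟫ := by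
      rw [← inner_neg_left]; congr 1; abel
    rw [hinner]; linarith
  have htend : Filter.Tendsto (fun t : ℝ => g z + t / (2 * s) * ‖z - p‖ ^ 2) (𝓝[>] (0:ℝ))
      (𝓝 (g z)) := by
    have hc : Continuous fun t : ℝ => g z + t / (2 * s) * ‖z - p‖ ^ 2 := by continuity
    have h0 : Filter.Tendsto (fun t : ℝ => g z + t / (2 * s) * ‖z - p‖ ^ 2) (𝓝 0)
        (𝓝 (g z)) := by simpa using hc.tendsto 0
    exact h0.mono_left nhdsWithin_le_nhds
  exact ge_of_tendsto htend (by
    filter_upwards [Ioc_mem_nhdsGT_of_mem (by simp : (0:ℝ) ∈ Ico (0:ℝ) 1)] with t ht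
    exact key t ht)

end Aux

/-- **Pivotal inequality for composite optimization.**
For `Φ = f + g` with `f` convex with `L`-Lipschitz gradient and `g` continuous convex,
step size `0 < s ≤ 1/L`, `P` the `s`-proximal operator and `G` the `s`-proximal
subgradient, one has
`Φ(y − s·G_s(y)) ≤ Φ(x) + ⟨G_s(y), y − x⟩ − (s − s²L/2)·‖G_s(y)‖²`. -/
theorem pivotal_inequality_composite {d : ℕ}
    (f g : EuclideanSpace ℝ (Fin d) → ℝ)
    (f' : EuclideanSpace ℝ (Fin d) → EuclideanSpace ℝ (Fin d))
    (L s : ℝ) (hL : 0 < L) (hs : 0 < s) (hsL : s ≤ 1 / L)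
    (hfconv : ConvexOn ℝ Set.univ f)
    (hf' : ∀ x, HasGradientAt f (f' x) x)
    (hlip : ∀ x y, ‖f' x - f' y‖ ≤ L * ‖x - y‖)
    (hgconv : ConvexOn ℝ Set.univ g) (hgcont : Continuous g)
    (Φ : EuclideanSpace ℝ (Fin d) → ℝ) (hΦ : ∀ x, Φ x = f x + g x)
    (P : EuclideanSpace ℝ (Fin d) → EuclideanSpace ℝ (Fin d))
    (hP : ∀ x, IsMinOn (fun z => 1 / (2 * s) * ‖z - (x - s • f' x)‖ ^ 2 + g z) Set.univ (P x))
    (G : EuclideanSpace ℝ (Fin d) → EuclideanSpace ℝ (Fin d))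
    (hG : ∀ x, G x = s⁻¹ • (x - P x)) :
    ∀ x y : EuclideanSpace ℝ (Fin d),
      Φ (y - s • G y) ≤ Φ x + ⟪G y, y - x⟫ - (s - s ^ 2 * L / 2) * ‖G y‖ ^ 2 := by
  intro x y
  set p := P y with hp
  have hGy : G y = s⁻¹ • (y - p) := hG y
  have hyp : y - s • G y = p := by
    rw [hGy, smul_smul, mul_inv_cancel₀ hs.ne', one_smul]
    abel
  have hdes := descent_lemma f' hf' hlip y (p - y)
  rw [show y + (p - y) = p by abel] at hdes
  have hcv := convex_grad_ineq hfconv (hf' y) x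
  have hmin : ∀ z, 1 / (2 * s) * ‖p - (y - s • f' y)‖ ^ 2 + g p
      ≤ 1 / (2 * s) * ‖z - (y - s • f' y)‖ ^ 2 + g z := by
    intro z
    exact isMinOn_iff.1 (hP y) z (mem_univ z)
  have hprox := prox_subgrad hgconv hs hmin x
  rw [hyp, hΦ p, hΦ x, hGy]
  have hkey : -⟪f' y, x - y⟫ + ⟪f' y, p - y⟫ + L / 2 * ‖p - y‖ ^ 2
      - s⁻¹ * ⟪(y - s • f' y) - p, x - p⟫
      = ⟪s⁻¹ • (y - p), y - x⟫ - (s - s ^ 2 * L / 2) * ‖s⁻¹ • (y - p)‖ ^ 2 := by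
    have h1 : ‖p - y‖ ^ 2 = ⟪p - y, p - y⟫ := (real_inner_self_eq_norm_sq _).symm
    have h2 : ‖s⁻¹ • (y - p)‖ ^ 2 = s⁻¹ * s⁻¹ * ⟪y - p, y - p⟫ := by
      rw [← real_inner_self_eq_norm_sq, real_inner_smul_left, real_inner_smul_right]; ring
    rw [h1, h2]
    simp only [inner_sub_left, inner_sub_right, real_inner_smul_left, real_inner_smul_right]
    field_simp
    ring
  linarith [hdes, hcv, hprox, hkey]
end

section
/- Let Φ = f + g with f : ℝ^d → ℝ convex with L-Lipschitz gradient and g : ℝ^d → ℝ continuous convex, let x⋆ be a minimizer of Φ, and let 0 < s ≤ 1/L. For the ISTA iterates x_k = x_{k−1} − s·G_s(x_{k−1}) starting from any x₀ ∈ ℝ^d, one has lim_{k→∞} k(k+1) · min_{0 ≤ i ≤ k} ‖G_s(x_i)‖² = 0. -/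
open scoped RealInnerProductSpace Topology
open Filter

section Aux
variable {E : Type*} [NormedAddCommGroup E] [InnerProductSpace ℝ E] [CompleteSpace E]

theorem aux_deriv_line {f : E → ℝ} {f' : E → E} (hf' : ∀ x, HasGradientAt f (f' x) x)
    (x v : E) (t : ℝ) : HasDerivAt (fun t : ℝ => f (x + t • v)) ⟪f' (x + t • v), v⟫ t := by
  have h1 : HasDerivAt (fun t : ℝ => x + t • v) v t := by
    simpa using ((hasDerivAt_id t).smul_const v).const_add x
  have h2 := (hf' (x + t • v)).hasFDerivAt.comp_hasDerivAt t h1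
  simp at h2
  exact h2

theorem aux_convex_lb {f : E → ℝ} {f' : E → E} (hfconv : ConvexOn ℝ Set.univ f)
    (hf' : ∀ x, HasGradientAt f (f' x) x) (x y : E) :
    f x + ⟪f' x, y - x⟫ ≤ f y := by
  set v := y - x with hv
  -- slope inequality: for t ∈ (0,1], (f (x + t•v) - f x)/t ≤ f y - f x
  have hslope : ∀ t : ℝ, t ∈ Set.Ioc (0:ℝ) 1 → (f (x + t • v) - f x) / t ≤ f y - f x := by
    rintro t ⟨ht0, ht1⟩
    have hc := hfconv.2 (Set.mem_univ x) (Set.mem_univ y) (by linarith : (0:ℝ) ≤ 1 - t)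
      ht0.le (by ring)
    have hxy : (1 - t) • x + t • y = x + t • v := by
      simp [hv, smul_sub, sub_smul]; abel
    rw [hxy] at hc
    rw [div_le_iff₀ ht0]
    calc f (x + t•v) - f x ≤ ((1-t) * f x + t * f y) - f x := by simp only [smul_eq_mul] at hc; linarith
    _ = (f y - f x) * t := by ring
  have hd := aux_deriv_line hf' x v 0
  simp only [zero_smul, add_zero] at hd
  have hts : Filter.Tendsto (fun t : ℝ => (f (x + t • v) - f x) / t) (𝓝[>] 0)
      (𝓝 ⟪f' x, v⟫) := by
    have := hd.hasDerivWithinAt (s := Set.Ioi 0)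
    have h2 := (hasDerivWithinAt_iff_tendsto_slope.mp this)
    have h3 : Set.Ioi (0:ℝ) \ {0} = Set.Ioi 0 := by simp [Set.diff_eq, Set.ext_iff]; intro a ha; linarith
    rw [h3] at h2
    refine h2.congr (fun t => ?_)
    simp [slope, vsub_eq_sub, div_eq_inv_mul]
  have hle : ⟪f' x, v⟫ ≤ f y - f x := by
    refine le_of_tendsto hts ?_
    filter_upwards [Ioc_mem_nhdsGT_of_mem (by norm_num : (0:ℝ) ∈ Set.Ico (0:ℝ) 1)] with t ht
    exact hslope t ht
  linarith

theorem aux_quad_ub {f : E → ℝ} {f' : E → E} {L : ℝ}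
    (hf' : ∀ x, HasGradientAt f (f' x) x)
    (hlip : ∀ x y, ‖f' x - f' y‖ ≤ L * ‖x - y‖) (x y : E) :
    f y ≤ f x + ⟪f' x, y - x⟫ + L / 2 * ‖y - x‖ ^ 2 := by
  set v := y - x with hv
  set φ : ℝ → ℝ := fun t => f (x + t • v) - t * ⟪f' x, v⟫ - L * t ^ 2 / 2 * ‖v‖ ^ 2 with hφ
  have hdφ : ∀ t : ℝ, HasDerivAt φ (⟪f' (x + t • v), v⟫ - ⟪f' x, v⟫ - L * t * ‖v‖ ^ 2) t := by
    intro t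
    have h1 := aux_deriv_line hf' x v t
    have h2 : HasDerivAt (fun t : ℝ => t * ⟪f' x, v⟫) ⟪f' x, v⟫ t := by
      simpa using (hasDerivAt_id t).mul_const _
    have h3 : HasDerivAt (fun t : ℝ => L * t ^ 2 / 2 * ‖v‖ ^ 2) (L * t * ‖v‖ ^ 2) t := by
      have : HasDerivAt (fun t : ℝ => t ^ 2) (2 * t) t := by simpa using hasDerivAt_pow 2 t
      have := ((this.const_mul L).div_const 2).mul_const (‖v‖ ^ 2)
      exact this.congr_deriv (by ring)
    exact (h1.sub h2).sub h3
  have hmono : AntitoneOn φ (Set.Icc (0:ℝ) 1) := by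
    apply antitoneOn_of_deriv_nonpos (convex_Icc 0 1)
    · exact fun t _ => ((hdφ t).differentiableAt.continuousAt).continuousWithinAt
    · intro t ht
      exact (hdφ t).differentiableAt.differentiableWithinAt
    · intro t ht
      rw [interior_Icc] at ht
      rw [(hdφ t).deriv]
      have h1 : ⟪f' (x + t • v) - f' x, v⟫ ≤ ‖f' (x + t • v) - f' x‖ * ‖v‖ :=
        real_inner_le_norm _ _
      have h2 : ‖f' (x + t • v) - f' x‖ ≤ L * (t * ‖v‖) := by
        have := hlip (x + t • v) x
        simpa [norm_smul, abs_of_pos ht.1, mul_assoc] using this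
      have h3 : ⟪f' (x + t • v) - f' x, v⟫ = ⟪f' (x + t • v), v⟫ - ⟪f' x, v⟫ :=
        inner_sub_left _ _ _
      nlinarith [norm_nonneg v, norm_nonneg (f' (x + t • v) - f' x), ht.1.le]
  have h01 := hmono (Set.left_mem_Icc.2 zero_le_one) (Set.right_mem_Icc.2 zero_le_one) zero_le_one
  simp only [hφ, zero_smul, add_zero, one_smul, zero_pow, one_pow] at h01
  have hxy : x + v = y := by simp [hv]
  rw [hxy] at h01
  norm_num at h01
  linarith

theorem aux_prox_subgrad {g : E → ℝ} {s : ℝ} (hs : 0 < s)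
    (hgconv : ConvexOn ℝ Set.univ g) {w p : E}
    (hP : IsMinOn (fun z => 1 / (2 * s) * ‖z - w‖ ^ 2 + g z) Set.univ p) (z : E) :
    g p + ⟪s⁻¹ • (w - p), z - p⟫ ≤ g z := by
  have hs0 : s ≠ 0 := hs.ne'
  set u := z - p with hu
  set A : ℝ := ⟪p - w, u⟫ with hA
  set N : ℝ := ‖u‖ ^ 2 with hN
  have key : ∀ t : ℝ, t ∈ Set.Ioc (0:ℝ) 1 →
      -(s⁻¹ * A) - s⁻¹ * t * N / 2 ≤ g z - g p := by
    rintro t ⟨ht0, ht1⟩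
    have hmin := hP (Set.mem_univ (p + t • u))
    simp only [Set.mem_setOf_eq] at hmin
    have hgc := hgconv.2 (Set.mem_univ p) (Set.mem_univ z) (by linarith : (0:ℝ) ≤ 1 - t)
      ht0.le (by ring)
    have hpt : (1 - t) • p + t • z = p + t • u := by
      simp [hu, smul_sub, sub_smul]; abel
    rw [hpt] at hgc
    simp only [smul_eq_mul] at hgc
    have hexp : ‖p + t • u - w‖ ^ 2 = ‖p - w‖ ^ 2 + 2 * t * A + t ^ 2 * N := by
      have h1 : p + t • u - w = (p - w) + t • u := by abel
      rw [h1, norm_add_sq_real, real_inner_smul_right, norm_smul]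
      simp [abs_of_pos ht0, hA, hN]
      ring
    have hc : (1:ℝ) / (2 * s) = s⁻¹ / 2 := by field_simp
    rw [hexp, hc] at hmin
    have h2 : g (p + t • u) ≤ (1 - t) * g p + t * g z := hgc
    have hX : 0 ≤ t * ((g z - g p) + s⁻¹ * A + s⁻¹ * t * N / 2) := by nlinarith [hmin, h2]
    have hX0 : 0 ≤ (g z - g p) + s⁻¹ * A + s⁻¹ * t * N / 2 := by
      by_contra h
      push_neg at h
      exact absurd hX (not_le.2 (mul_neg_of_pos_of_neg ht0 h))
    linarith
  have htend : Filter.Tendsto (fun t : ℝ => -(s⁻¹ * A) - s⁻¹ * t * N / 2)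
      (𝓝[>] (0:ℝ)) (𝓝 (-(s⁻¹ * A))) := by
    have hcont : Continuous (fun t : ℝ => -(s⁻¹ * A) - s⁻¹ * t * N / 2) := by continuity
    have := hcont.tendsto 0
    simp only [mul_zero, zero_mul, zero_div, sub_zero] at this
    exact Filter.Tendsto.mono_left this nhdsWithin_le_nhds
  have hle : -(s⁻¹ * A) ≤ g z - g p := by
    refine le_of_tendsto htend ?_
    filter_upwards [Ioc_mem_nhdsGT_of_mem (by norm_num : (0:ℝ) ∈ Set.Ico (0:ℝ) 1)] with t ht
    exact key t ht
  have heq : ⟪s⁻¹ • (w - p), u⟫ = -(s⁻¹ * A) := by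
    rw [real_inner_smul_left, hA, show w - p = -(p - w) by abel, inner_neg_left]
    ring
  rw [heq]; linarith

theorem aux_key {f g : E → ℝ} {f' : E → E} {L s : ℝ} (hs : 0 < s) (hsL : s * L ≤ 1)
    (hfconv : ConvexOn ℝ Set.univ f) (hf' : ∀ x, HasGradientAt f (f' x) x)
    (hlip : ∀ x y, ‖f' x - f' y‖ ≤ L * ‖x - y‖) (hgconv : ConvexOn ℝ Set.univ g)
    {z pz Gz : E}
    (hpz : IsMinOn (fun u => 1 / (2 * s) * ‖u - (z - s • f' z)‖ ^ 2 + g u) Set.univ pz)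
    (hGz : Gz = s⁻¹ • (z - pz)) (y : E) :
    f pz + g pz ≤ f y + g y + ⟪Gz, z - y⟫ - s / 2 * ‖Gz‖ ^ 2 := by
  have hs0 : s ≠ 0 := hs.ne'
  have hpzz : pz = z - s • Gz := by
    rw [hGz, smul_inv_smul₀ hs0]; abel
  have hq := aux_quad_ub hf' hlip z pz
  have hcv := aux_convex_lb hfconv hf' z y
  have hpx := aux_prox_subgrad hs hgconv hpz y
  set I1 : ℝ := ⟪f' z, Gz⟫ with hI1
  set I2 : ℝ := ⟪f' z, y - z⟫ with hI2
  set I3 : ℝ := ⟪Gz, y - z⟫ with hI3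
  set n2 : ℝ := ‖Gz‖ ^ 2 with hn2
  have e1 : ⟪f' z, pz - z⟫ = -(s * I1) := by
    rw [hpzz, show z - s • Gz - z = -(s • Gz) by abel, inner_neg_right, real_inner_smul_right]
  have e2 : ‖pz - z‖ ^ 2 = s ^ 2 * n2 := by
    rw [hpzz, show z - s • Gz - z = -(s • Gz) by abel, norm_neg, norm_smul]
    simp [abs_of_pos hs, hn2]; ring
  have e3 : s⁻¹ • (z - s • f' z - pz) = Gz - f' z := by
    rw [hGz, show z - s • f' z - pz = (z - pz) - s • f' z by abel, smul_sub, inv_smul_smul₀ hs0]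
  have e4 : ⟪Gz - f' z, y - pz⟫ = I3 + s * n2 - I2 - s * I1 := by
    rw [hpzz, show y - (z - s • Gz) = (y - z) + s • Gz by abel]
    rw [inner_sub_left, inner_add_right, inner_add_right, real_inner_smul_right,
      real_inner_smul_right, real_inner_self_eq_norm_sq]
    simp only [hI1, hI2, hI3, hn2]
    ring
  rw [e1, e2] at hq
  rw [e3, e4] at hpx
  have e5 : ⟪Gz, z - y⟫ = -I3 := by
    rw [show z - y = -(y - z) by abel, inner_neg_right, hI3]
  rw [e5]
  have hn2nn : 0 ≤ n2 := sq_nonneg _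
  nlinarith [hq, hcv, hpx, mul_nonneg hs.le hn2nn]

end Aux

theorem aux_nat_mul_tendsto {a : ℕ → ℝ} (hnn : ∀ n, 0 ≤ a n)
    (hant : ∀ n, a (n + 1) ≤ a n) (hsum : Summable a) :
    Tendsto (fun n : ℕ => (n : ℝ) * a n) atTop (𝓝 0) := by
  have hanti : Antitone a := antitone_nat_of_succ_le hant
  set t : ℕ → ℝ := fun m => ∑' k, a (k + m) with ht
  have htail : Tendsto t atTop (𝓝 0) := tendsto_sum_nat_add a
  -- n * a n ≤ 2 * t (n/2 + 1) for all n
  have hbound : ∀ n : ℕ, (n : ℝ) * a n ≤ 2 * t (n / 2 + 1) := by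
    intro n
    set m := n / 2 with hm
    have hsum' : Summable (fun k => a (k + (m + 1))) := (summable_nat_add_iff (m+1)).2 hsum
    have h1 : ((n - m : ℕ) : ℝ) * a n ≤ t (m + 1) := by
      have hle : ∀ i ∈ Finset.range (n - m), a n ≤ a (i + (m + 1)) := by
        intro i hi
        simp only [Finset.mem_range] at hi
        have : i + (m + 1) ≤ n := by omega
        exact hanti this
      calc ((n - m : ℕ) : ℝ) * a n = ∑ i ∈ Finset.range (n - m), a n := by
            simp [mul_comm]
      _ ≤ ∑ i ∈ Finset.range (n - m), a (i + (m + 1)) := Finset.sum_le_sum hle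
      _ ≤ t (m + 1) := Summable.sum_le_tsum _ (fun i _ => hnn _) hsum'
    have h2 : (n : ℝ) ≤ 2 * ((n - m : ℕ) : ℝ) := by
      have : n ≤ 2 * (n - m) := by omega
      exact_mod_cast this
    have h3 : 0 ≤ a n := hnn n
    nlinarith [h1, h2, h3]
  have hlow : ∀ n : ℕ, (0:ℝ) ≤ (n : ℝ) * a n := fun n =>
    mul_nonneg (Nat.cast_nonneg n) (hnn n)
  have hup : Tendsto (fun n : ℕ => 2 * t (n / 2 + 1)) atTop (𝓝 0) := by
    have hdiv : Tendsto (fun n : ℕ => n / 2 + 1) atTop atTop := by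
      apply tendsto_atTop_atTop.2
      intro b; exact ⟨2 * b, fun n hn => by omega⟩
    have := (htail.comp hdiv).const_mul (2:ℝ)
    simpa using this
  exact squeeze_zero hlow hbound hup


/-- **ISTA little-o rate for the proximal subgradient norm.** For any step size
`0 < s ≤ 1/L`, `lim_{k→∞} k(k+1)·min_{0 ≤ i ≤ k} ‖G_s(x_i)‖² = 0`. -/
theorem ista_subgradient_norm_little_o {d : ℕ}
    (f g : EuclideanSpace ℝ (Fin d) → ℝ)
    (f' : EuclideanSpace ℝ (Fin d) → EuclideanSpace ℝ (Fin d))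
    (L s : ℝ) (hL : 0 < L) (hs : 0 < s)
    (hfconv : ConvexOn ℝ Set.univ f)
    (hf' : ∀ x, HasGradientAt f (f' x) x)
    (hlip : ∀ x y, ‖f' x - f' y‖ ≤ L * ‖x - y‖)
    (hgconv : ConvexOn ℝ Set.univ g) (hgcont : Continuous g)
    (Φ : EuclideanSpace ℝ (Fin d) → ℝ) (hΦ : ∀ x, Φ x = f x + g x)
    (P : EuclideanSpace ℝ (Fin d) → EuclideanSpace ℝ (Fin d))
    (hP : ∀ x, IsMinOn (fun z => 1 / (2 * s) * ‖z - (x - s • f' x)‖ ^ 2 + g z) Set.univ (P x))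
    (G : EuclideanSpace ℝ (Fin d) → EuclideanSpace ℝ (Fin d))
    (hG : ∀ x, G x = s⁻¹ • (x - P x))
    (xstar : EuclideanSpace ℝ (Fin d)) (hstar : IsMinOn Φ Set.univ xstar)
    (x : ℕ → EuclideanSpace ℝ (Fin d))
    (hx : ∀ k : ℕ, x (k + 1) = x k - s • G (x k))
    (hsL : s ≤ 1 / L) :
    Filter.Tendsto
      (fun k : ℕ => (k : ℝ) * ((k : ℝ) + 1) *
        Finset.inf' (Finset.range (k + 1)) Finset.nonempty_range_add_one
          (fun i => ‖G (x i)‖ ^ 2))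
      Filter.atTop (𝓝 0) := by
  have hs0 : s ≠ 0 := hs.ne'
  have hsL' : s * L ≤ 1 := by
    rw [le_div_iff₀ hL] at hsL; linarith
  -- x (k+1) = P (x k)
  have hxP : ∀ k, x (k + 1) = P (x k) := by
    intro k
    rw [hx k, hG (x k), smul_inv_smul₀ hs0]
    abel
  obtain ⟨a, ha⟩ : ∃ a : ℕ → ℝ, ∀ k, a k = Φ (x k) - Φ xstar := ⟨_, fun _ => rfl⟩
  obtain ⟨b, hb⟩ : ∃ b : ℕ → ℝ, ∀ k, b k = ‖G (x k)‖ ^ 2 := ⟨_, fun _ => rfl⟩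
  have hbnn : ∀ k, 0 ≤ b k := fun k => by rw [hb]; positivity
  have hann : ∀ k, 0 ≤ a k := fun k => by rw [ha]; exact sub_nonneg.2 (hstar (Set.mem_univ (x k)))
  -- key inequality specialized
  have key : ∀ k (y : EuclideanSpace ℝ (Fin d)),
      Φ (x (k + 1)) ≤ Φ y + ⟪G (x k), x k - y⟫ - s / 2 * b k := by
    intro k y
    have := aux_key hs hsL' hfconv hf' hlip hgconv (hP (x k)) (hG (x k)) y
    rw [hxP k, hΦ, hΦ, hb]
    exact this
  -- descent
  have hdec : ∀ k, a (k + 1) + s / 2 * b k ≤ a k := by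
    intro k
    have := key k (x k)
    simp only [sub_self, inner_zero_right] at this
    rw [ha, ha]
    linarith
  have hant : ∀ k, a (k + 1) ≤ a k := by
    intro k; have := hdec k; nlinarith [hbnn k, hs.le]
  -- distance decrease
  have hF2 : ∀ k, 2 * s * a (k + 1) ≤ ‖x k - xstar‖ ^ 2 - ‖x (k + 1) - xstar‖ ^ 2 := by
    intro k
    have hk := key k xstar
    have hexp : ‖x (k + 1) - xstar‖ ^ 2
        = ‖x k - xstar‖ ^ 2 - 2 * s * ⟪G (x k), x k - xstar⟫ + s ^ 2 * ‖G (x k)‖ ^ 2 := by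
      rw [hx k, show x k - s • G (x k) - xstar = (x k - xstar) - s • G (x k) by abel,
        norm_sub_sq_real, real_inner_smul_right, norm_smul]
      simp only [Real.norm_eq_abs, abs_of_pos hs]
      rw [real_inner_comm]
      ring
    have hbk := hbnn k
    rw [ha]
    rw [hb] at hk
    nlinarith [hk, hs.le, hs, mul_le_mul_of_nonneg_left hk (by linarith : (0:ℝ) ≤ 2 * s)]
  -- partial sums of a bounded
  have hsumbound : ∀ n, ∑ i ∈ Finset.range n, a i ≤ a 0 + ‖x 0 - xstar‖ ^ 2 / (2 * s) := by
    intro n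
    have htel : ∀ n, 2 * s * ∑ i ∈ Finset.range n, a (i + 1)
        ≤ ‖x 0 - xstar‖ ^ 2 - ‖x n - xstar‖ ^ 2 := by
      intro n
      induction n with
      | zero => simp
      | succ n ih =>
        rw [Finset.sum_range_succ]
        have := hF2 n
        nlinarith [this, ih]
    have h1 : ∑ i ∈ Finset.range n, a (i + 1) ≤ ‖x 0 - xstar‖ ^ 2 / (2 * s) := by
      have := htel n
      have h2 : 0 ≤ ‖x n - xstar‖ ^ 2 := sq_nonneg _
      rw [le_div_iff₀ (by linarith : (0:ℝ) < 2 * s)]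
      nlinarith
    calc ∑ i ∈ Finset.range n, a i ≤ ∑ i ∈ Finset.range (n + 1), a i := by
          rw [Finset.sum_range_succ]; linarith [hann n]
    _ = ∑ i ∈ Finset.range n, a (i + 1) + a 0 := Finset.sum_range_succ' a n
    _ ≤ _ := by linarith
  have hsummable : Summable a :=
    summable_of_sum_range_le hann hsumbound
  have hna : Tendsto (fun n : ℕ => (n : ℝ) * a n) atTop (𝓝 0) :=
    aux_nat_mul_tendsto hann hant hsummable
  have ha0 : Tendsto a atTop (𝓝 0) := hsummable.tendsto_atTop_zero
  obtain ⟨c, hc⟩ : ∃ c : ℕ → ℝ, ∀ n, c n = ((n : ℝ) + 1) * a n := ⟨_, fun _ => rfl⟩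
  have hctend : Tendsto c atTop (𝓝 0) := by
    have := hna.add ha0
    simp only [add_zero] at this
    refine this.congr fun n => ?_
    rw [hc]; ring
  -- sum of b over Ico
  have hbsum : ∀ m k, m ≤ k → s / 2 * ∑ i ∈ Finset.Ico m k, b i ≤ a m := by
    intro m k hmk
    have htel : s / 2 * ∑ i ∈ Finset.Ico m k, b i ≤ a m - a k := by
      induction k with
      | zero =>
        have : m = 0 := Nat.le_zero.1 hmk
        subst this; simp
      | succ k ih =>
        rcases Nat.lt_or_ge m (k + 1) with h | h
        · have hmk' : m ≤ k := by omega
          have ih' := ih hmk'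
          rw [Finset.sum_Ico_succ_top hmk']
          have := hdec k
          nlinarith [ih']
        · have : m = k + 1 := by omega
          subst this; simp
    linarith [hann k]
  -- the min function
  obtain ⟨M, hM⟩ : ∃ M : ℕ → ℝ, ∀ k, M k = Finset.inf' (Finset.range (k + 1))
      Finset.nonempty_range_add_one (fun i => ‖G (x i)‖ ^ 2) := ⟨_, fun _ => rfl⟩
  have hMnn : ∀ k, 0 ≤ M k := by
    intro k
    rw [hM]
    exact Finset.le_inf' _ _ (fun i _ => sq_nonneg _)
  -- main bound: k(k+1) M k ≤ 8 * c (k/2) / s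
  have hmain : ∀ k : ℕ, (k : ℝ) * ((k : ℝ) + 1) * M k ≤ 8 * c (k / 2) / s := by
    intro k
    obtain ⟨m, hm⟩ : ∃ m, m = k / 2 := ⟨_, rfl⟩
    rw [← hm]
    have hmk : m ≤ k := by omega
    -- (k - m) * M k ≤ ∑_{Ico m k} b i
    have h1 : ((k - m : ℕ) : ℝ) * M k ≤ ∑ i ∈ Finset.Ico m k, b i := by
      have hle : ∀ i ∈ Finset.Ico m k, M k ≤ b i := by
        intro i hi
        simp only [Finset.mem_Ico] at hi
        rw [hM, hb]
        exact Finset.inf'_le _ (Finset.mem_range.2 (by omega))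
      calc ((k - m : ℕ) : ℝ) * M k = ∑ _i ∈ Finset.Ico m k, M k := by
            rw [Finset.sum_const, Nat.card_Ico]; simp [mul_comm]
      _ ≤ _ := Finset.sum_le_sum hle
    have h2 := hbsum m k hmk
    -- s * ((k-m) * M k) ≤ 2 * a m
    have h3 : s * (((k - m : ℕ) : ℝ) * M k) ≤ 2 * a m := by
      have h1' := mul_le_mul_of_nonneg_left h1 (by positivity : (0:ℝ) ≤ s / 2)
      linarith
    have h4 : (k : ℝ) ≤ 2 * ((k - m : ℕ) : ℝ) := by exact_mod_cast (by omega : k ≤ 2 * (k - m))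
    have h5 : (k : ℝ) + 1 ≤ 2 * ((m : ℝ) + 1) := by
      have : (k : ℝ) + 1 ≤ 2 * ((m : ℕ) : ℝ) + 2 := by
        exact_mod_cast (by omega : k + 1 ≤ 2 * m + 2)
      linarith
    rw [le_div_iff₀ hs]
    have hMk := hMnn k
    have hkm : (0:ℝ) ≤ ((k - m : ℕ) : ℝ) := Nat.cast_nonneg _
    have hknn : (0:ℝ) ≤ (k : ℝ) := Nat.cast_nonneg _
    have hamnn := hann m
    rw [hc]
    have hk1 : (0:ℝ) ≤ (k:ℝ) + 1 := by positivity
    have hm1 : (0:ℝ) ≤ ((m:ℕ):ℝ) + 1 := by positivity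
    nlinarith [mul_le_mul_of_nonneg_right h4 (mul_nonneg (mul_nonneg hk1 hMk) hs.le),
      mul_le_mul_of_nonneg_right h5 (mul_nonneg (mul_nonneg hkm hMk) hs.le),
      mul_le_mul_of_nonneg_left h3 hm1]
  have hupper : Tendsto (fun k : ℕ => 8 * c (k / 2) / s) atTop (𝓝 0) := by
    have hdiv : Tendsto (fun k : ℕ => k / 2) atTop atTop := by
      apply tendsto_atTop_atTop.2
      intro bb; exact ⟨2 * bb, fun n hn => by omega⟩
    have := ((hctend.comp hdiv).const_mul (8:ℝ)).div_const s
    simpa using this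
  have hlower : ∀ k : ℕ, (0:ℝ) ≤ (k : ℝ) * ((k : ℝ) + 1) * M k := by
    intro k
    have : (0:ℝ) ≤ (k : ℝ) * ((k : ℝ) + 1) := by positivity
    exact mul_nonneg this (hMnn k)
  have : Filter.Tendsto (fun k : ℕ => (k : ℝ) * ((k : ℝ) + 1) * M k) Filter.atTop (𝓝 0) :=
    squeeze_zero hlower hmain hupper
  refine this.congr fun k => ?_
  rw [hM]
end

section
/- Let Φ = f + g with f : ℝ^d → ℝ convex with L-Lipschitz gradient and g : ℝ^d → ℝ continuous convex, let x⋆ be a minimizer of Φ, let r ≥ 2 and 0 < s < 1/L. For the FISTA iterates x_k = y_{k−1} − s·G_s(y_{k−1}), y_k = x_k + ((k−1)/(k+r))(x_k − x_{k−1}) with x₀ = y₀ ∈ ℝ^d, one has for every k ≥ 0: min_{0 ≤ i ≤ k} ‖G_s(y_i)‖² ≤ 6r²‖x₀ − x⋆‖² / ( s²(1 − sL)(k+1)(2k² + (6r+1)k + 6r²) ). -/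
open scoped RealInnerProductSpace

section Aux
variable {V : Type*} [NormedAddCommGroup V] [InnerProductSpace ℝ V] [CompleteSpace V]

lemma aux_line_deriv (f : V → ℝ) (f' : V → V) (hf : ∀ p, HasGradientAt f (f' p) p)
    (a v : V) (t : ℝ) :
    HasDerivAt (fun t : ℝ => f (a + t • v)) ⟪f' (a + t • v), v⟫ t := by
  have hline : HasDerivAt (fun t : ℝ => a + t • v) v t := by
    simpa using ((hasDerivAt_id t).smul_const v).const_add a
  have h2 := (hasGradientAt_iff_hasFDerivAt.mp (hf (a + t • v))).comp_hasDerivAt t hline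
  simp only [Function.comp_def, InnerProductSpace.toDual_apply_apply] at h2
  exact h2

lemma aux_convex_grad {f : V → ℝ} {f' : V → V} (hconv : ConvexOn ℝ Set.univ f)
    (hf : ∀ p, HasGradientAt f (f' p) p) (y z : V) :
    f y + ⟪f' y, z - y⟫ ≤ f z := by
  set φ : ℝ → ℝ := fun t => f (y + t • (z - y)) with hφ
  have hder : HasDerivAt φ ⟪f' y, z - y⟫ 0 := by
    simpa using aux_line_deriv f f' hf y (z - y) 0
  have hslope : Filter.Tendsto (slope φ 0) (nhdsWithin 0 (Set.Ioi 0))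
      (nhds ⟪f' y, z - y⟫) := by
    have := hasDerivAt_iff_tendsto_slope.mp hder
    exact this.mono_left (nhdsWithin_mono _ (fun t ht => ne_of_gt ht))
  have hev : ∀ᶠ t in nhdsWithin (0:ℝ) (Set.Ioi 0), slope φ 0 t ≤ f z - f y := by
    filter_upwards [Ioc_mem_nhdsGT_of_mem ⟨le_refl (0:ℝ), zero_lt_one⟩] with t ht
    have ht0 : 0 < t := ht.1
    have hcomb := hconv.2 (Set.mem_univ y) (Set.mem_univ z)
      (by linarith [ht.2] : (0:ℝ) ≤ 1 - t) ht0.le (by ring)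
    have heq : (1 - t) • y + t • z = y + t • (z - y) := by
      simp [smul_sub, sub_smul]; abel
    rw [heq] at hcomb
    have h1 : φ t ≤ (1 - t) * f y + t * f z := by simpa [hφ, smul_eq_mul] using hcomb
    have hφ0 : φ 0 = f y := by simp [hφ]
    rw [slope_def_field, hφ0, sub_zero, div_le_iff₀ ht0]
    nlinarith
  have := le_of_tendsto hslope hev
  linarith

lemma aux_descent {f : V → ℝ} {f' : V → V} {L : ℝ}
    (hf : ∀ p, HasGradientAt f (f' p) p)
    (hlip : ∀ p q, ‖f' p - f' q‖ ≤ L * ‖p - q‖) (a b : V) :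
    f b ≤ f a + ⟪f' a, b - a⟫ + L / 2 * ‖b - a‖ ^ 2 := by
  set v : V := b - a with hv
  set χ : ℝ → ℝ := fun t => f (a + t • v) - t * ⟪f' a, v⟫ - L * t ^ 2 / 2 * ‖v‖ ^ 2 with hχ
  have hder : ∀ t : ℝ, HasDerivAt χ
      (⟪f' (a + t • v), v⟫ - ⟪f' a, v⟫ - L * t * ‖v‖ ^ 2) t := by
    intro t
    have h1 := aux_line_deriv f f' hf a v t
    have h2 : HasDerivAt (fun t : ℝ => t * ⟪f' a, v⟫) ⟪f' a, v⟫ t := by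
      simpa using (hasDerivAt_id t).mul_const ⟪f' a, v⟫
    have h3 : HasDerivAt (fun t : ℝ => L * t ^ 2 / 2 * ‖v‖ ^ 2) (L * t * ‖v‖ ^ 2) t := by
      have hp : HasDerivAt (fun t : ℝ => t ^ 2) (2 * t) t := by
        simpa using hasDerivAt_pow 2 t
      have := ((hp.const_mul L).div_const 2).mul_const (‖v‖ ^ 2)
      rw [show L * t * ‖v‖ ^ 2 = L * (2 * t) / 2 * ‖v‖ ^ 2 by ring]
      exact this
    have h4 := (h1.sub h2).sub h3
    exact h4
  have hanti : AntitoneOn χ (Set.Icc 0 1) := by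
    apply antitoneOn_of_deriv_nonpos (convex_Icc 0 1)
    · exact Continuous.continuousOn
        (Differentiable.continuous (fun t => (hder t).differentiableAt))
    · intro t ht
      exact ((hder t).differentiableAt).differentiableWithinAt
    · intro t ht
      rw [interior_Icc] at ht
      rw [(hder t).deriv]
      have h4 : ⟪f' (a + t • v) - f' a, v⟫ ≤ L * t * ‖v‖ ^ 2 := by
        calc ⟪f' (a + t • v) - f' a, v⟫ ≤ ‖f' (a + t • v) - f' a‖ * ‖v‖ :=
              real_inner_le_norm _ _
          _ ≤ L * ‖(a + t • v) - a‖ * ‖v‖ := by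
              have := hlip (a + t • v) a
              nlinarith [norm_nonneg v]
          _ = L * t * ‖v‖ ^ 2 := by
              rw [add_sub_cancel_left, norm_smul]
              simp [abs_of_pos ht.1]
              ring
      rw [inner_sub_left] at h4
      linarith
  have h01 := hanti (Set.mem_Icc.mpr ⟨le_refl 0, zero_le_one⟩)
    (Set.mem_Icc.mpr ⟨zero_le_one, le_refl 1⟩) zero_le_one
  have hχ0 : χ 0 = f a := by simp [hχ]
  have hχ1 : χ 1 = f b - ⟪f' a, v⟫ - L / 2 * ‖v‖ ^ 2 := by
    simp [hχ]
    simp [hv]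
  rw [hχ0, hχ1] at h01
  linarith

omit [CompleteSpace V] in
lemma aux_prox {g : V → ℝ} (hgconv : ConvexOn ℝ Set.univ g) {s : ℝ} (hs : 0 < s)
    (w p : V) (hm : IsMinOn (fun z => 1 / (2 * s) * ‖z - w‖ ^ 2 + g z) Set.univ p)
    (z : V) : ⟪w - p, z - p⟫ ≤ s * (g z - g p) := by
  have key : ∀ t : ℝ, t ∈ Set.Ioc (0:ℝ) 1 →
      0 ≤ (1 / s) * ⟪p - w, z - p⟫ + t / (2 * s) * ‖z - p‖ ^ 2 + (g z - g p) := by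
    intro t ht
    have ht0 : 0 < t := ht.1
    have hmin := hm (Set.mem_univ (p + t • (z - p)))
    simp only [Set.mem_setOf_eq] at hmin
    have hnorm : ‖p + t • (z - p) - w‖ ^ 2
        = ‖p - w‖ ^ 2 + 2 * (t * ⟪p - w, z - p⟫) + t ^ 2 * ‖z - p‖ ^ 2 := by
      have heq2 : p + t • (z - p) - w = (p - w) + t • (z - p) := by abel
      rw [heq2, norm_add_sq_real, real_inner_smul_right, norm_smul]
      simp [abs_of_pos ht0]
      ring
    have hg : g (p + t • (z - p)) ≤ (1 - t) * g p + t * g z := by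
      have hcomb := hgconv.2 (Set.mem_univ p) (Set.mem_univ z)
        (by linarith [ht.2] : (0:ℝ) ≤ 1 - t) ht0.le (by ring)
      have heq : (1 - t) • p + t • z = p + t • (z - p) := by
        simp [smul_sub, sub_smul]; abel
      rw [heq] at hcomb
      simpa [smul_eq_mul] using hcomb
    have h2 : 1 / (2 * s) * ‖p - w‖ ^ 2 + g p ≤
        1 / (2 * s) * (‖p - w‖ ^ 2 + 2 * (t * ⟪p - w, z - p⟫) + t ^ 2 * ‖z - p‖ ^ 2)
          + ((1 - t) * g p + t * g z) := by
      calc 1 / (2 * s) * ‖p - w‖ ^ 2 + g p ≤ _ := hmin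
        _ ≤ _ := by rw [hnorm]; linarith
    have h3 : 0 ≤ 1 / (2 * s) * (2 * (t * ⟪p - w, z - p⟫) + t ^ 2 * ‖z - p‖ ^ 2)
        + t * (g z - g p) := by
      have expand : 1 / (2 * s) * (‖p - w‖ ^ 2 + 2 * (t * ⟪p - w, z - p⟫) + t ^ 2 * ‖z - p‖ ^ 2)
          = 1 / (2 * s) * ‖p - w‖ ^ 2
            + 1 / (2 * s) * (2 * (t * ⟪p - w, z - p⟫) + t ^ 2 * ‖z - p‖ ^ 2) := by ring
      rw [expand] at h2
      linarith
    have h4 : 0 ≤ t * ((1 / s) * ⟪p - w, z - p⟫ + t / (2 * s) * ‖z - p‖ ^ 2 + (g z - g p)) := by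
      have heq3 : t * ((1 / s) * ⟪p - w, z - p⟫ + t / (2 * s) * ‖z - p‖ ^ 2 + (g z - g p))
          = 1 / (2 * s) * (2 * (t * ⟪p - w, z - p⟫) + t ^ 2 * ‖z - p‖ ^ 2)
            + t * (g z - g p) := by field_simp
      rw [heq3]; exact h3
    exact nonneg_of_mul_nonneg_right h4 ht0
  have hlim : Filter.Tendsto
      (fun t : ℝ => (1 / s) * ⟪p - w, z - p⟫ + t / (2 * s) * ‖z - p‖ ^ 2 + (g z - g p))
      (nhdsWithin 0 (Set.Ioi 0))
      (nhds ((1 / s) * ⟪p - w, z - p⟫ + 0 / (2 * s) * ‖z - p‖ ^ 2 + (g z - g p))) := by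
    apply Filter.Tendsto.mono_left _ nhdsWithin_le_nhds
    exact Continuous.tendsto (by continuity) 0
  have hge : 0 ≤ (1 / s) * ⟪p - w, z - p⟫ + 0 / (2 * s) * ‖z - p‖ ^ 2 + (g z - g p) := by
    apply ge_of_tendsto hlim
    filter_upwards [Ioc_mem_nhdsGT_of_mem ⟨le_refl (0:ℝ), zero_lt_one⟩] with t ht
    exact key t ht
  have hiw : ⟪p - w, z - p⟫ = - ⟪w - p, z - p⟫ := by
    rw [← inner_neg_left]; congr 1; abel
  rw [hiw] at hge
  simp only [zero_div, zero_mul, add_zero] at hge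
  calc ⟪w - p, z - p⟫ = s * ((1/s) * ⟪w - p, z - p⟫) := by field_simp
    _ ≤ s * (g z - g p) := by
        apply mul_le_mul_of_nonneg_left _ hs.le
        linarith

end Aux

lemma aux_sumT (r : ℝ) (hr : r ≠ 0) (k : ℕ) :
    ∑ i ∈ Finset.range (k+1), (((i:ℝ)+r)/r)^2
      = ((k:ℝ)+1)*(2*(k:ℝ)^2+(6*r+1)*(k:ℝ)+6*r^2)/(6*r^2) := by
  induction k with
  | zero => simp; field_simp
  | succ n ih =>
      rw [Finset.sum_range_succ, ih]
      push_cast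
      field_simp
      ring
set_option maxHeartbeats 2000000 in
/-- **FISTA proximal subgradient norm minimization.** For momentum `r ≥ 2` and step size
`0 < s < 1/L`, `min_{0 ≤ i ≤ k} ‖G_s(y_i)‖² ≤
6r²‖x₀ − x⋆‖²/(s²(1 − sL)(k+1)(2k² + (6r+1)k + 6r²))` for every `k ≥ 0`. -/
theorem fista_subgradient_norm_rate {d : ℕ}
    (f g : EuclideanSpace ℝ (Fin d) → ℝ)
    (f' : EuclideanSpace ℝ (Fin d) → EuclideanSpace ℝ (Fin d))
    (L s r : ℝ) (hL : 0 < L) (hs : 0 < s) (hr : 2 ≤ r)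
    (hfconv : ConvexOn ℝ Set.univ f)
    (hf' : ∀ x, HasGradientAt f (f' x) x)
    (hlip : ∀ x y, ‖f' x - f' y‖ ≤ L * ‖x - y‖)
    (hgconv : ConvexOn ℝ Set.univ g) (hgcont : Continuous g)
    (Φ : EuclideanSpace ℝ (Fin d) → ℝ) (hΦ : ∀ x, Φ x = f x + g x)
    (P : EuclideanSpace ℝ (Fin d) → EuclideanSpace ℝ (Fin d))
    (hP : ∀ x, IsMinOn (fun z => 1 / (2 * s) * ‖z - (x - s • f' x)‖ ^ 2 + g z) Set.univ (P x))
    (G : EuclideanSpace ℝ (Fin d) → EuclideanSpace ℝ (Fin d))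
    (hG : ∀ x, G x = s⁻¹ • (x - P x))
    (xstar : EuclideanSpace ℝ (Fin d)) (hstar : IsMinOn Φ Set.univ xstar)
    (x y : ℕ → EuclideanSpace ℝ (Fin d)) (hxy0 : x 0 = y 0)
    (hx : ∀ k : ℕ, x (k + 1) = y k - s • G (y k))
    (hy : ∀ k : ℕ, y (k + 1) =
      x (k + 1) + ((((k : ℝ) + 1) - 1) / (((k : ℝ) + 1) + r)) • (x (k + 1) - x k))
    (hsL : s < 1 / L) :
    ∀ k : ℕ,
      Finset.inf' (Finset.range (k + 1)) Finset.nonempty_range_add_one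
          (fun i => ‖G (y i)‖ ^ 2) ≤
        6 * r ^ 2 * ‖x 0 - xstar‖ ^ 2 /
          (s ^ 2 * (1 - s * L) * ((k : ℝ) + 1) *
            (2 * (k : ℝ) ^ 2 + (6 * r + 1) * (k : ℝ) + 6 * r ^ 2)) := by
  have hrpos : (0:ℝ) < r := by linarith
  have hs' : s ≠ 0 := ne_of_gt hs
  have hsL1 : s * L < 1 := by rw [lt_div_iff₀ hL] at hsL; exact hsL
  have hΦmin : ∀ z, Φ xstar ≤ Φ z := fun z => hstar (Set.mem_univ z)
  have hxP : ∀ k, x (k+1) = P (y k) := by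
    intro k
    rw [hx k, hG (y k), smul_smul, mul_inv_cancel₀ hs', one_smul, sub_sub_cancel]
  -- key one-step inequality
  have key : ∀ (k : ℕ) (z : EuclideanSpace ℝ (Fin d)),
      Φ (x (k+1)) ≤ Φ z + ⟪G (y k), y k - z⟫ - s * (1 - s * L / 2) * ‖G (y k)‖ ^ 2 := by
    intro k z
    have hYp : y k - P (y k) = s • G (y k) := by
      rw [hG (y k), smul_smul, mul_inv_cancel₀ hs', one_smul]
    have hdes := aux_descent hf' hlip (y k) (P (y k))
    have hcvx := aux_convex_grad hfconv hf' (y k) z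
    have hpro := aux_prox hgconv hs (y k - s • f' (y k)) (P (y k)) (hP (y k)) z
    -- rewrite prox inequality
    have hw : y k - s • f' (y k) - P (y k) = s • G (y k) - s • f' (y k) := by
      rw [← hYp]; abel
    rw [hw] at hpro
    have hpro2 : ⟪G (y k), z - P (y k)⟫ - ⟪f' (y k), z - P (y k)⟫ ≤ g z - g (P (y k)) := by
      have h5 : ⟪s • G (y k) - s • f' (y k), z - P (y k)⟫
          = s * (⟪G (y k), z - P (y k)⟫ - ⟪f' (y k), z - P (y k)⟫) := by
        rw [inner_sub_left, real_inner_smul_left, real_inner_smul_left]; ring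
      rw [h5] at hpro
      exact le_of_mul_le_mul_left (by linarith) hs
    have hnrm : ‖P (y k) - y k‖ ^ 2 = s ^ 2 * ‖G (y k)‖ ^ 2 := by
      have : P (y k) - y k = -(s • G (y k)) := by rw [← hYp]; abel
      rw [this, norm_neg, norm_smul, mul_pow, Real.norm_eq_abs, sq_abs]
    have hGp : ⟪G (y k), P (y k)⟫ - ⟪G (y k), y k⟫ = - (s * ‖G (y k)‖ ^ 2) := by
      have h6 : ⟪G (y k), P (y k) - y k⟫ = ⟪G (y k), -(s • G (y k))⟫ := by
        rw [show P (y k) - y k = -(s • G (y k)) from by rw [← hYp]; abel]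
      rw [inner_sub_right] at h6
      rw [h6]
      rw [inner_neg_right, real_inner_smul_right, real_inner_self_eq_norm_sq]
    rw [hxP k, hΦ (P (y k)), hΦ z]
    rw [hnrm] at hdes
    simp only [inner_sub_right] at hdes hcvx hpro2 ⊢
    linarith
  intro k'
  -- sequences
  set T : ℕ → ℝ := fun k => ((k:ℝ) + r)/r with hT
  set U : ℕ → EuclideanSpace ℝ (Fin d) :=
    fun k => T k • y k - (T k - 1) • x k - xstar with hU
  set A : ℕ → ℝ := fun k => Nat.casesOn k 0 (fun j => (T j)^2) with hA
  have hT1 : ∀ k : ℕ, 1 ≤ T k := by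
    intro k
    rw [hT]
    rw [le_div_iff₀ hrpos, one_mul]
    have : (0:ℝ) ≤ (k:ℝ) := Nat.cast_nonneg k
    linarith
  have hT0 : T 0 = 1 := by
    simp only [hT, Nat.cast_zero, zero_add]
    exact div_self hrpos.ne'
  -- U recursion
  have hUrec : ∀ k : ℕ, U (k+1) = U k - (s * T k) • G (y k) := by
    intro k
    have hne : ((k:ℝ) + 1 + r) ≠ 0 := by positivity
    have hcoef : T (k+1) * ((((k:ℝ)+1) - 1)/(((k:ℝ)+1) + r)) = T k - 1 := by
      simp only [hT]
      push_cast
      field_simp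
      ring
    have h1 : T (k+1) • y (k+1) = T (k+1) • x (k+1) + (T k - 1) • (x (k+1) - x k) := by
      rw [hy k, smul_add, smul_smul, hcoef]
    calc U (k+1) = T (k+1) • y (k+1) - (T (k+1) - 1) • x (k+1) - xstar := by
            simp only [hU]
      _ = T (k+1) • x (k+1) + (T k - 1) • (x (k+1) - x k)
            - (T (k+1) - 1) • x (k+1) - xstar := by rw [h1]
      _ = T k • x (k+1) - (T k - 1) • x k - xstar := by module
      _ = T k • (y k - s • G (y k)) - (T k - 1) • x k - xstar := by rw [hx k]
      _ = U k - (s * T k) • G (y k) := by simp only [hU]; module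
  -- norm expansion
  have hnormU : ∀ k : ℕ, ‖U (k+1)‖^2
      = ‖U k‖^2 - 2*(s*T k)*⟪G (y k), U k⟫ + (s*T k)^2*‖G (y k)‖^2 := by
    intro k
    rw [hUrec k, norm_sub_sq_real, real_inner_smul_right, norm_smul, mul_pow,
      Real.norm_eq_abs, sq_abs, real_inner_comm]
    ring
  -- inner combination
  have hinner : ∀ k : ℕ, (T k - 1) * ⟪G (y k), y k - x k⟫ + ⟪G (y k), y k - xstar⟫
      = ⟪G (y k), U k⟫ := by
    intro k
    simp only [hU, inner_sub_right, real_inner_smul_right]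
    ring
  -- A lower bound
  have hAlow : ∀ k : ℕ, (T k)^2 - T k ≤ A k := by
    intro k
    cases k with
    | zero => simp only [hA, hT0]; norm_num
    | succ j =>
        have hAj : A (j+1) = (T j)^2 := by simp only [hA]
        rw [hAj]
        simp only [hT]
        have hkey2 : ((j:ℝ)+1+r)^2 - r*((j:ℝ)+1+r) ≤ ((j:ℝ)+r)^2 := by
          nlinarith [Nat.cast_nonneg (α := ℝ) j]
        have hc : (((j:ℕ)+1:ℕ):ℝ) = (j:ℝ)+1 := by push_cast; ring
        rw [hc, div_pow, div_pow]
        have heq : ((j:ℝ)+1+r)/r = (r*(((j:ℝ)+1+r)))/r^2 := by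
          field_simp
        rw [heq, div_sub_div_same, div_le_div_iff₀ (by positivity) (by positivity)]
        nlinarith [sq_nonneg r, hkey2, hrpos]
  have hAsucc : ∀ j : ℕ, A (j+1) = (T j)^2 := fun j => by rw [hA]
  have hA0 : A 0 = 0 := by rw [hA]; rfl
  have hU0 : U 0 = x 0 - xstar := by
    simp only [hU, hT0, hxy0, one_smul, sub_self, zero_smul, sub_zero]
  have sumT : ∑ i ∈ Finset.range (k'+1), (T i)^2
      = ((k':ℝ)+1)*(2*(k':ℝ)^2+(6*r+1)*(k':ℝ)+6*r^2)/(6*r^2) := by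
    simp only [hT]
    exact aux_sumT r hrpos.ne' k'
  clear_value T U A
  -- one-step energy inequality (times 2s)
  have step : ∀ k : ℕ,
      2*s*(A (k+1) * (Φ (x (k+1)) - Φ xstar)) + ‖U (k+1)‖^2
        + s^2*(1-s*L)*(T k)^2*‖G (y k)‖^2
      ≤ 2*s*(A k * (Φ (x k) - Φ xstar)) + ‖U k‖^2 := by
    intro k
    have hTk := hT1 k
    have k1 := key k (x k)
    have k2 := key k xstar
    have hδ : 0 ≤ Φ (x k) - Φ xstar := by linarith [hΦmin (x k)]
    have hAup : A (k+1) = (T k)^2 := hAsucc k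
    have p1 := mul_le_mul_of_nonneg_left k1 (by linarith : (0:ℝ) ≤ T k - 1)
    -- e1 : T k * Φ(x (k+1)) ≤ (T k - 1) * Φ (x k) + Φ xstar + ⟪G, U k⟫ - T k * c1 * N
    have e1 : T k * Φ (x (k+1)) ≤ (T k - 1) * Φ (x k) + Φ xstar + ⟪G (y k), U k⟫
        - T k * (s * (1 - s * L / 2) * ‖G (y k)‖^2) := by
      have hi := hinner k
      linarith [p1, k2, hi]
    have p2 := mul_le_mul_of_nonneg_left e1 (by linarith : (0:ℝ) ≤ T k)
    have p4 := mul_le_mul_of_nonneg_right (hAlow k) hδ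
    have p3 := mul_le_mul_of_nonneg_left p2 (by linarith : (0:ℝ) ≤ 2*s)
    have p5 := mul_le_mul_of_nonneg_left p4 (by linarith : (0:ℝ) ≤ 2*s)
    have hnu := hnormU k
    rw [hAup]
    linarith [p3, p5, hnu]
  -- telescoping
  have tele : ∀ k : ℕ,
      2*s*(A (k+1) * (Φ (x (k+1)) - Φ xstar)) + ‖U (k+1)‖^2
        + s^2*(1-s*L) * ∑ i ∈ Finset.range (k+1), (T i)^2 * ‖G (y i)‖^2
      ≤ ‖x 0 - xstar‖^2 := by
    intro k
    induction k with
    | zero =>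
        have hst := step 0
        rw [Finset.sum_range_one]
        rw [hA0, hU0] at hst
        linarith
    | succ n ih =>
        have hst := step (n+1)
        rw [Finset.sum_range_succ]
        linarith
  -- final bound
  have hδk' : 0 ≤ Φ (x (k'+1)) - Φ xstar := by linarith [hΦmin (x (k'+1))]
  have hAk1 : 0 ≤ A (k'+1) := by
    rw [hAsucc k']; positivity
  have bound : s^2*(1-s*L) * ∑ i ∈ Finset.range (k'+1), (T i)^2 * ‖G (y i)‖^2
      ≤ ‖x 0 - xstar‖^2 := by
    have h2s : 0 ≤ 2*s*(A (k'+1) * (Φ (x (k'+1)) - Φ xstar)) :=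
      mul_nonneg (by linarith) (mul_nonneg hAk1 hδk')
    linarith [tele k', h2s, sq_nonneg ‖U (k'+1)‖]
  set m := Finset.inf' (Finset.range (k' + 1)) Finset.nonempty_range_add_one
      (fun i => ‖G (y i)‖ ^ 2) with hm
  clear_value m
  have hm_le : ∀ i ∈ Finset.range (k'+1), m ≤ ‖G (y i)‖^2 := by
    intro i hi
    rw [hm]
    exact Finset.inf'_le _ hi
  have sum_ge : m * ∑ i ∈ Finset.range (k'+1), (T i)^2
      ≤ ∑ i ∈ Finset.range (k'+1), (T i)^2 * ‖G (y i)‖^2 := by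
    rw [Finset.mul_sum]
    apply Finset.sum_le_sum
    intro i hi
    have h7 := hm_le i hi
    calc m * (T i)^2 = (T i)^2 * m := by ring
      _ ≤ (T i)^2 * ‖G (y i)‖^2 := mul_le_mul_of_nonneg_left h7 (sq_nonneg _)
  set Q : ℝ := 2*(k':ℝ)^2+(6*r+1)*(k':ℝ)+6*r^2 with hQ
  have hk0 : (0:ℝ) ≤ (k':ℝ) := Nat.cast_nonneg k'
  have hQpos : 0 < Q := by
    rw [hQ]
    nlinarith [mul_nonneg (by linarith : (0:ℝ) ≤ 6*r+1) hk0, sq_nonneg (k':ℝ), hrpos]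
  have hk1pos : (0:ℝ) < (k':ℝ)+1 := by positivity
  have hDpos : (0:ℝ) < s^2*(1-s*L) := by
    have : 0 < 1 - s*L := by linarith
    positivity
  have hdenpos : (0:ℝ) < s ^ 2 * (1 - s * L) * ((k':ℝ) + 1) * Q := by
    have h8 : 0 < 1 - s*L := by linarith
    positivity
  rw [le_div_iff₀ hdenpos]
  -- from bound and sum_ge : m * (s^2*(1-s*L)*((k'+1)*Q/(6r^2))) ≤ ‖x0 - xstar‖^2
  have main : s^2*(1-s*L) * (m * (((k':ℝ)+1)*Q/(6*r^2))) ≤ ‖x 0 - xstar‖^2 := by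
    rw [← sumT]
    calc s^2*(1-s*L) * (m * ∑ i ∈ Finset.range (k'+1), (T i)^2)
        ≤ s^2*(1-s*L) * ∑ i ∈ Finset.range (k'+1), (T i)^2 * ‖G (y i)‖^2 :=
          mul_le_mul_of_nonneg_left sum_ge hDpos.le
      _ ≤ ‖x 0 - xstar‖^2 := bound
  have hmul := mul_le_mul_of_nonneg_left main (by positivity : (0:ℝ) ≤ 6*r^2)
  calc m * (s ^ 2 * (1 - s * L) * ((k':ℝ) + 1) * Q)
      = 6*r^2 * (s^2*(1-s*L) * (m * (((k':ℝ)+1)*Q/(6*r^2)))) := by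
        field_simp
    _ ≤ 6*r^2 * ‖x 0 - xstar‖^2 := hmul
    _ = 6 * r ^ 2 * ‖x 0 - xstar‖ ^ 2 := by ring
end

section
/- Let Φ = f + g with f : ℝ^d → ℝ convex with L-Lipschitz gradient and g : ℝ^d → ℝ continuous convex, let x⋆ be a minimizer of Φ, let r ≥ 2 and 0 < s < 1/L. For the FISTA iterates x_k = y_{k−1} − s·G_s(y_{k−1}), y_k = x_k + ((k−1)/(k+r))(x_k − x_{k−1}) with x₀ = y₀ ∈ ℝ^d, one has lim_{k→∞} k³ · min_{0 ≤ i ≤ k} ‖G_s(y_i)‖² = 0. -/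
open scoped RealInnerProductSpace Topology

section FistaAux

variable {E : Type*} [NormedAddCommGroup E] [InnerProductSpace ℝ E] [CompleteSpace E]

private lemma fista_line_hasDerivAt (f : E → ℝ) (f' : E → E)
    (hf' : ∀ x, HasGradientAt f (f' x) x) (x v : E) (t : ℝ) :
    HasDerivAt (fun t : ℝ => f (x + t • v)) ⟪f' (x + t • v), v⟫ t := by
  have hline : HasDerivAt (fun t : ℝ => x + t • v) v t := by
    simpa using ((hasDerivAt_id t).smul_const v).const_add x
  have hf := (hf' (x + t • v)).hasFDerivAt
  have := hf.comp_hasDerivAt t hline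
  simp at this
  exact this

private lemma fista_descent (f : E → ℝ) (f' : E → E) (L : ℝ)
    (hf' : ∀ x, HasGradientAt f (f' x) x)
    (hlip : ∀ x y, ‖f' x - f' y‖ ≤ L * ‖x - y‖) (x y : E) :
    f y ≤ f x + ⟪f' x, y - x⟫ + L / 2 * ‖y - x‖ ^ 2 := by
  set v := y - x with hv
  set ψ : ℝ → ℝ := fun t => f (x + t • v) - t * ⟪f' x, v⟫ - L / 2 * t ^ 2 * ‖v‖ ^ 2 with hψ
  have hderiv : ∀ t : ℝ, HasDerivAt ψ (⟪f' (x + t • v), v⟫ - ⟪f' x, v⟫ - L * t * ‖v‖ ^ 2) t := by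
    intro t
    have h1 := fista_line_hasDerivAt f f' hf' x v t
    have h2 : HasDerivAt (fun t : ℝ => t * ⟪f' x, v⟫) ⟪f' x, v⟫ t := by
      simpa using (hasDerivAt_id t).mul_const (⟪f' x, v⟫)
    have h3 : HasDerivAt (fun t : ℝ => L / 2 * t ^ 2 * ‖v‖ ^ 2) (L * t * ‖v‖ ^ 2) t := by
      have := ((hasDerivAt_pow 2 t).const_mul (L / 2)).mul_const (‖v‖ ^ 2)
      refine this.congr_deriv ?_
      ring
    exact (h1.sub h2).sub h3
  have anti : AntitoneOn ψ (Set.Icc (0:ℝ) 1) := by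
    apply antitoneOn_of_deriv_nonpos (convex_Icc 0 1)
    · exact fun t _ => ((hderiv t).continuousAt).continuousWithinAt
    · exact fun t _ => ((hderiv t).differentiableAt).differentiableWithinAt
    · intro t ht
      rw [interior_Icc] at ht
      rw [(hderiv t).deriv]
      have hsub : ⟪f' (x + t • v), v⟫ - ⟪f' x, v⟫ = ⟪f' (x + t • v) - f' x, v⟫ := by
        rw [inner_sub_left]
      rw [hsub]
      have h1 : ⟪f' (x + t • v) - f' x, v⟫ ≤ ‖f' (x + t • v) - f' x‖ * ‖v‖ :=
        real_inner_le_norm _ _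
      have h2 : ‖f' (x + t • v) - f' x‖ ≤ L * ‖(x + t • v) - x‖ := hlip _ _
      have h3 : ‖(x + t • v) - x‖ = t * ‖v‖ := by
        rw [add_sub_cancel_left, norm_smul, Real.norm_eq_abs, abs_of_pos ht.1]
      rw [h3] at h2
      have h4 := mul_le_mul_of_nonneg_right h2 (norm_nonneg v)
      nlinarith [norm_nonneg v]
  have h01 := anti (Set.left_mem_Icc.2 zero_le_one) (Set.right_mem_Icc.2 zero_le_one) zero_le_one
  have hψ0 : ψ 0 = f x := by simp [hψ]
  have hψ1 : ψ 1 = f y - ⟪f' x, v⟫ - L / 2 * ‖v‖ ^ 2 := by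
    simp [hψ, hv]
  rw [hψ0, hψ1] at h01
  linarith

private lemma fista_grad_convex (f : E → ℝ) (f' : E → E) (hconv : ConvexOn ℝ Set.univ f)
    (hf' : ∀ x, HasGradientAt f (f' x) x) (x z : E) :
    f x + ⟪f' x, z - x⟫ ≤ f z := by
  set φ : ℝ → ℝ := fun t => f (x + t • (z - x)) with hφ
  have hd : HasDerivAt φ ⟪f' x, z - x⟫ 0 := by
    have := fista_line_hasDerivAt f f' hf' x (z - x) 0
    simpa using this
  have hslope : Filter.Tendsto (fun t : ℝ => (φ t - φ 0) / t) (𝓝[>] (0:ℝ))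
      (𝓝 ⟪f' x, z - x⟫) := by
    have h := hasDerivAt_iff_tendsto_slope.mp hd
    have h2 : Filter.Tendsto (slope φ 0) (𝓝[>] (0:ℝ)) (𝓝 ⟪f' x, z - x⟫) :=
      h.mono_left (nhdsWithin_mono 0 (fun t ht => ne_of_gt ht))
    refine h2.congr (fun t => ?_)
    simp [slope_def_field, div_eq_inv_mul]
  have hbound : ∀ᶠ t in 𝓝[>] (0:ℝ), (φ t - φ 0) / t ≤ f z - f x := by
    filter_upwards [Ioc_mem_nhdsGT_of_mem (Set.left_mem_Ico.2 zero_lt_one)] with t ht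
    have hcomb := hconv.2 (Set.mem_univ x) (Set.mem_univ z)
      (by linarith [ht.2] : (0:ℝ) ≤ 1 - t) ht.1.le (by ring)
    have heq : (1 - t) • x + t • z = x + t • (z - x) := by
      module
    rw [heq] at hcomb
    have hφt : φ t ≤ (1 - t) * f x + t * f z := hcomb
    rw [div_le_iff₀ ht.1]
    have hφ0 : φ 0 = f x := by simp [hφ]
    rw [hφ0]
    nlinarith
  have := le_of_tendsto hslope hbound
  have hφ0 : φ 0 = f x := by simp [hφ]
  linarith

private lemma fista_prox_subgrad (g : E → ℝ) (hg : ConvexOn ℝ Set.univ g) (s : ℝ) (hs : 0 < s)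
    (w p : E) (hmin : IsMinOn (fun z => 1 / (2 * s) * ‖z - w‖ ^ 2 + g z) Set.univ p)
    (z : E) : g p ≤ g z + (1 / s) * ⟪p - w, z - p⟫ := by
  have key : ∀ t : ℝ, t ∈ Set.Ioc (0:ℝ) 1 →
      -(t * (1 / (2 * s)) * ‖z - p‖ ^ 2) ≤ (1 / s) * ⟪p - w, z - p⟫ + g z - g p := by
    intro t ht
    have hmem := isMinOn_iff.mp hmin (p + t • (z - p)) (Set.mem_univ _)
    have hcomb := hg.2 (Set.mem_univ p) (Set.mem_univ z)
      (by linarith [ht.2] : (0:ℝ) ≤ 1 - t) ht.1.le (by ring)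
    have heq : (1 - t) • p + t • z = p + t • (z - p) := by module
    rw [heq] at hcomb
    have hnorm : ‖p + t • (z - p) - w‖ ^ 2
        = ‖p - w‖ ^ 2 + 2 * t * ⟪p - w, z - p⟫ + t ^ 2 * ‖z - p‖ ^ 2 := by
      have h1 : p + t • (z - p) - w = (p - w) + t • (z - p) := by abel
      rw [h1, norm_add_sq_real, real_inner_smul_right, norm_smul, Real.norm_eq_abs,
        mul_pow, sq_abs]
      ring
    rw [hnorm] at hmem
    have expand : 1 / (2 * s) * (‖p - w‖ ^ 2 + 2 * t * ⟪p - w, z - p⟫ + t ^ 2 * ‖z - p‖ ^ 2)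
        = 1 / (2 * s) * ‖p - w‖ ^ 2 + t * (1 / s) * ⟪p - w, z - p⟫
          + t ^ 2 * (1 / (2 * s)) * ‖z - p‖ ^ 2 := by
      field_simp
    rw [expand] at hmem
    have hg' : g (p + t • (z - p)) ≤ (1 - t) * g p + t * g z := hcomb
    have ht0 : 0 < t := ht.1
    have h3 : 0 ≤ t * (1 / s) * ⟪p - w, z - p⟫ + t ^ 2 * (1 / (2 * s)) * ‖z - p‖ ^ 2
        + t * g z - t * g p := by nlinarith
    have hdn := div_nonneg h3 ht0.le
    have hdiv : (t * (1 / s) * ⟪p - w, z - p⟫ + t ^ 2 * (1 / (2 * s)) * ‖z - p‖ ^ 2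
        + t * g z - t * g p) / t
        = (1 / s) * ⟪p - w, z - p⟫ + t * (1 / (2 * s)) * ‖z - p‖ ^ 2 + g z - g p := by
      field_simp
    rw [hdiv] at hdn
    linarith
  have htend : Filter.Tendsto (fun t : ℝ => -(t * (1 / (2 * s)) * ‖z - p‖ ^ 2)) (𝓝[>] (0:ℝ))
      (𝓝 0) := by
    have : Filter.Tendsto (fun t : ℝ => -(t * (1 / (2 * s)) * ‖z - p‖ ^ 2)) (𝓝 (0:ℝ))
        (𝓝 (-(0 * (1 / (2 * s)) * ‖z - p‖ ^ 2))) := by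
      exact (((continuous_id.mul continuous_const).mul continuous_const).neg).tendsto 0
    simpa using this.mono_left nhdsWithin_le_nhds
  have hfin : (0:ℝ) ≤ (1 / s) * ⟪p - w, z - p⟫ + g z - g p := by
    refine le_of_tendsto htend ?_
    filter_upwards [Ioc_mem_nhdsGT_of_mem (Set.left_mem_Ico.2 zero_lt_one)] with t ht
    exact key t ht
  linarith

private lemma fista_inner_cross (u p z : E) :
    2 * ⟪p - u, z - p⟫ = ‖u - z‖ ^ 2 - ‖p - z‖ ^ 2 - ‖p - u‖ ^ 2 := by
  have h : u - z = (u - p) + (p - z) := by abel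
  rw [h, norm_add_sq_real]
  have h2 : ⟪u - p, p - z⟫ = ⟪p - u, z - p⟫ := by
    rw [show u - p = -(p - u) by abel, show p - z = -(z - p) by abel, inner_neg_neg]
  have h3 : ‖u - p‖ = ‖p - u‖ := norm_sub_rev _ _
  rw [h2, h3]
  ring

private lemma fista_norm_comb (T : ℝ) (u v a b : E) :
    T * (T - 1) * (‖u - a‖ ^ 2 - ‖v - a‖ ^ 2) + T * (‖u - b‖ ^ 2 - ‖v - b‖ ^ 2)
      = ‖T • u - ((T - 1) • a + b)‖ ^ 2 - ‖T • v - ((T - 1) • a + b)‖ ^ 2 := by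
  simp only [← real_inner_self_eq_norm_sq]
  simp only [inner_sub_left, inner_sub_right, inner_add_left, inner_add_right,
    real_inner_smul_left, real_inner_smul_right]
  simp only [real_inner_comm a u, real_inner_comm b u, real_inner_comm a v,
    real_inner_comm b v, real_inner_comm b a]
  ring

private lemma fista_key_ineq (f g : E → ℝ) (f' : E → E) (L s : ℝ) (hs : 0 < s)
    (hfconv : ConvexOn ℝ Set.univ f)
    (hf' : ∀ x, HasGradientAt f (f' x) x)
    (hlip : ∀ x y, ‖f' x - f' y‖ ≤ L * ‖x - y‖)
    (hgconv : ConvexOn ℝ Set.univ g)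
    (P : E → E)
    (hP : ∀ x, IsMinOn (fun z => 1 / (2 * s) * ‖z - (x - s • f' x)‖ ^ 2 + g z) Set.univ (P x))
    (u z : E) :
    2 * s * (f (P u) + g (P u)) ≤ 2 * s * (f z + g z)
      + ‖u - z‖ ^ 2 - ‖P u - z‖ ^ 2 - (1 - L * s) * ‖u - P u‖ ^ 2 := by
  set p := P u with hp
  have h1 := fista_descent f f' L hf' hlip u p
  have h2 := fista_grad_convex f f' hfconv hf' u z
  have h3 := fista_prox_subgrad g hgconv s hs (u - s • f' u) p (hP u) z
  have hrw : p - (u - s • f' u) = (p - u) + s • f' u := by abel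
  rw [hrw, inner_add_left, real_inner_smul_left] at h3
  have h3' : s * g p ≤ s * g z + (⟪p - u, z - p⟫ + s * ⟪f' u, z - p⟫) := by
    have h := mul_le_mul_of_nonneg_left h3 hs.le
    have hX : s * (1 / s * (⟪p - u, z - p⟫ + s * ⟪f' u, z - p⟫))
        = ⟪p - u, z - p⟫ + s * ⟪f' u, z - p⟫ := by field_simp
    rw [mul_add, hX] at h
    exact h
  have hC2 : 2 * (s * ⟪f' u, z - p⟫) = 2 * (s * ⟪f' u, z - u⟫) - 2 * (s * ⟪f' u, p - u⟫) := by
    rw [show ⟪f' u, z - p⟫ = ⟪f' u, z - u⟫ - ⟪f' u, p - u⟫ by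
      rw [← inner_sub_right]; congr 1; abel]
    ring
  have hD := fista_inner_cross u p z
  have h1' := mul_le_mul_of_nonneg_left h1 (by positivity : (0:ℝ) ≤ 2 * s)
  have h2' := mul_le_mul_of_nonneg_left h2 (by positivity : (0:ℝ) ≤ 2 * s)
  have h3'' := mul_le_mul_of_nonneg_left h3' (by norm_num : (0:ℝ) ≤ 2)
  rw [show u - p = -(p - u) by abel, norm_neg]
  nlinarith [h1', h2', h3'', hC2, hD]

private lemma fista_tfact (r : ℝ) (hr : 2 ≤ r) (k : ℝ) (hk : 0 ≤ k) :
    ((k + r) / r) * ((k + r) / r - 1) ≤ ((k + r - 1) / r) ^ 2 := by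
  have hr0 : 0 < r := by linarith
  have h : (k + r) / r - 1 = k / r := by field_simp; ring
  rw [h, div_mul_div_comm, div_pow, div_le_div_iff₀ (by positivity) (by positivity)]
  nlinarith [mul_nonneg (mul_pos hr0 hr0).le
    (add_nonneg (mul_nonneg hk (by linarith : (0:ℝ) ≤ r - 2)) (sq_nonneg (r - 1)))]

end FistaAux

private noncomputable def fistaT (r : ℝ) (k : ℕ) : ℝ := ((k:ℝ) + r - 1) / r

private lemma fistaT_succ (r : ℝ) (k : ℕ) : fistaT r (k+1) = ((k:ℝ) + r) / r := by
  simp only [fistaT]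
  push_cast
  ring_nf

private lemma fistaT_nonneg (r : ℝ) (hr : 2 ≤ r) (k : ℕ) : 0 ≤ fistaT r k := by
  have hr0 : (0:ℝ) < r := by linarith
  apply div_nonneg _ hr0.le
  have : (0:ℝ) ≤ (k:ℝ) := Nat.cast_nonneg k
  linarith

private noncomputable def fistaEn {E : Type*} [NormedAddCommGroup E] [InnerProductSpace ℝ E]
    (r s : ℝ) (Φ : E → ℝ) (xstar : E) (x y : ℕ → E) (k : ℕ) : ℝ :=
  (fistaT r k)^2 * (2*s*(Φ (x k) - Φ xstar))
    + ‖fistaT r (k+1) • y k - ((fistaT r (k+1) - 1) • x k + xstar)‖^2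

set_option maxHeartbeats 1000000 in
/-- **FISTA inverse-cubic little-o rate for the proximal subgradient norm.** For momentum
`r ≥ 2` and step size `0 < s < 1/L`, `lim_{k→∞} k³·min_{0 ≤ i ≤ k} ‖G_s(y_i)‖² = 0`. -/
theorem fista_subgradient_norm_little_o {d : ℕ}
    (f g : EuclideanSpace ℝ (Fin d) → ℝ)
    (f' : EuclideanSpace ℝ (Fin d) → EuclideanSpace ℝ (Fin d))
    (L s r : ℝ) (hL : 0 < L) (hs : 0 < s) (hr : 2 ≤ r)
    (hfconv : ConvexOn ℝ Set.univ f)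
    (hf' : ∀ x, HasGradientAt f (f' x) x)
    (hlip : ∀ x y, ‖f' x - f' y‖ ≤ L * ‖x - y‖)
    (hgconv : ConvexOn ℝ Set.univ g) (hgcont : Continuous g)
    (Φ : EuclideanSpace ℝ (Fin d) → ℝ) (hΦ : ∀ x, Φ x = f x + g x)
    (P : EuclideanSpace ℝ (Fin d) → EuclideanSpace ℝ (Fin d))
    (hP : ∀ x, IsMinOn (fun z => 1 / (2 * s) * ‖z - (x - s • f' x)‖ ^ 2 + g z) Set.univ (P x))
    (G : EuclideanSpace ℝ (Fin d) → EuclideanSpace ℝ (Fin d))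
    (hG : ∀ x, G x = s⁻¹ • (x - P x))
    (xstar : EuclideanSpace ℝ (Fin d)) (hstar : IsMinOn Φ Set.univ xstar)
    (x y : ℕ → EuclideanSpace ℝ (Fin d)) (hxy0 : x 0 = y 0)
    (hx : ∀ k : ℕ, x (k + 1) = y k - s • G (y k))
    (hy : ∀ k : ℕ, y (k + 1) =
      x (k + 1) + ((((k : ℝ) + 1) - 1) / (((k : ℝ) + 1) + r)) • (x (k + 1) - x k))
    (hsL : s < 1 / L) :
    Filter.Tendsto
      (fun k : ℕ => (k : ℝ) ^ 3 *
        Finset.inf' (Finset.range (k + 1)) Finset.nonempty_range_add_one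
          (fun i => ‖G (y i)‖ ^ 2))
      Filter.atTop (𝓝 0) := by
  have hr0 : (0:ℝ) < r := by linarith
  have hrne : (r:ℝ) ≠ 0 := ne_of_gt hr0
  have hLs : L * s < 1 := by
    have := (lt_div_iff₀ hL).mp hsL
    linarith
  -- key inequality
  have key : ∀ u z, 2*s*Φ (P u) ≤ 2*s*Φ z + ‖u - z‖^2 - ‖P u - z‖^2
      - (1 - L*s)*‖u - P u‖^2 := by
    intro u z
    have := fista_key_ineq f g f' L s hs hfconv hf' hlip hgconv P hP u z
    rw [hΦ, hΦ]
    linarith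
  -- identification of iterates with prox steps
  have hPy : ∀ k : ℕ, P (y k) = x (k+1) := by
    intro k
    rw [hx k, hG (y k), smul_smul, mul_inv_cancel₀ (ne_of_gt hs), one_smul]
    abel
  -- the energy decay
  have step : ∀ k : ℕ, fistaEn r s Φ xstar x y (k+1)
      + (1 - L*s) * (fistaT r (k+1))^2 * ‖y k - x (k+1)‖^2 ≤ fistaEn r s Φ xstar x y k := by
    intro k
    have hT1 : 1 ≤ fistaT r (k+1) := by
      rw [fistaT_succ, le_div_iff₀ hr0]
      have : (0:ℝ) ≤ (k:ℝ) := Nat.cast_nonneg k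
      linarith
    have K1 := key (y k) (x k); rw [hPy k] at K1
    have K2 := key (y k) xstar; rw [hPy k] at K2
    have hnc := fista_norm_comb (fistaT r (k+1)) (y k) (x (k+1)) (x k) xstar
    have hk1r : ((k:ℝ) + 1 + r) ≠ 0 := by positivity
    have hZrec : fistaT r (k+2) • y (k+1) - ((fistaT r (k+2) - 1) • x (k+1) + xstar)
        = fistaT r (k+1) • x (k+1) - ((fistaT r (k+1) - 1) • x k + xstar) := by
      rw [hy k, show (k+2 : ℕ) = (k+1)+1 from rfl, fistaT_succ, fistaT_succ]
      push_cast
      match_scalars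
      · field_simp
        ring
      · field_simp
        ring
      · ring
    have hTT : fistaT r (k+1) * (fistaT r (k+1) - 1) ≤ (fistaT r k)^2 := by
      rw [fistaT_succ]
      have := fista_tfact r hr (k:ℝ) (Nat.cast_nonneg k)
      simpa [fistaT] using this
    have hF : 0 ≤ 2*s*(Φ (x k) - Φ xstar) := by
      have := isMinOn_iff.mp hstar (x k) (Set.mem_univ _)
      nlinarith
    have hcomp := mul_le_mul_of_nonneg_right hTT hF
    have hT0 : (0:ℝ) ≤ fistaT r (k+1) := by linarith
    have hTT0 : (0:ℝ) ≤ fistaT r (k+1) * (fistaT r (k+1) - 1) :=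
      mul_nonneg hT0 (by linarith)
    have K1' := mul_le_mul_of_nonneg_left K1 hTT0
    have K2' := mul_le_mul_of_nonneg_left K2 hT0
    simp only [fistaEn]
    rw [show (k+1+1 : ℕ) = k+2 from rfl, hZrec]
    nlinarith [K1', K2', hnc, hcomp]
  -- energies are nonnegative
  have hEnn : ∀ k : ℕ, 0 ≤ fistaEn r s Φ xstar x y k := by
    intro k
    have hmin := isMinOn_iff.mp hstar (x k) (Set.mem_univ _)
    have h1 : 0 ≤ 2*s*(Φ (x k) - Φ xstar) := by nlinarith
    exact add_nonneg (mul_nonneg (sq_nonneg _) h1) (sq_nonneg _)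
  -- telescoping
  have tele : ∀ N : ℕ, ∑ k ∈ Finset.range N,
      (1 - L*s) * (fistaT r (k+1))^2 * ‖y k - x (k+1)‖^2
      ≤ fistaEn r s Φ xstar x y 0 - fistaEn r s Φ xstar x y N := by
    intro N
    induction N with
    | zero => simp
    | succ N ih =>
      rw [Finset.sum_range_succ]
      have := step N
      linarith
  have tele2 : ∀ N : ℕ, ∑ k ∈ Finset.range N,
      (1 - L*s) * (fistaT r (k+1))^2 * ‖y k - x (k+1)‖^2
      ≤ fistaEn r s Φ xstar x y 0 := by
    intro N
    have := tele N
    have := hEnn N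
    linarith
  -- summability of the weighted gradient norms
  set bb : ℕ → ℝ := fun k => (fistaT r (k+1))^2 * ‖G (y k)‖^2 with hbb
  have hb0 : ∀ k, 0 ≤ bb k := by
    intro k
    simp only [hbb]
    positivity
  have hyx : ∀ k : ℕ, ‖y k - x (k+1)‖^2 = s^2 * ‖G (y k)‖^2 := by
    intro k
    rw [hx k, sub_sub_cancel, norm_smul, Real.norm_eq_abs, abs_of_pos hs, mul_pow]
  have c0 : (0:ℝ) < (1 - L*s)*s^2 := mul_pos (by linarith) (by positivity)
  have hsum : Summable bb := by
    apply summable_of_sum_range_le hb0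
      (c := fistaEn r s Φ xstar x y 0 / ((1 - L*s)*s^2))
    intro N
    rw [le_div_iff₀ c0]
    have heq : ∑ k ∈ Finset.range N, (1 - L*s) * (fistaT r (k+1))^2 * ‖y k - x (k+1)‖^2
        = (∑ k ∈ Finset.range N, bb k) * ((1 - L*s)*s^2) := by
      rw [Finset.sum_mul]
      apply Finset.sum_congr rfl
      intro k _
      rw [hyx k]
      simp only [hbb]
      ring
    have := tele2 N
    linarith [heq ▸ this]
  -- the limit argument
  set l : ℝ := ∑' k, bb k with hl
  have hS : Filter.Tendsto (fun n : ℕ => ∑ i ∈ Finset.range n, bb i) Filter.atTop (𝓝 l) :=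
    hsum.hasSum.tendsto_sum_nat
  have claim : ∀ k : ℕ, (k:ℝ)^3 *
      Finset.inf' (Finset.range (k+1)) Finset.nonempty_range_add_one (fun i => ‖G (y i)‖^2)
      ≤ 8*r^2 * (l - ∑ i ∈ Finset.range (k/2), bb i) := by
    intro k
    set m := Finset.inf' (Finset.range (k+1)) Finset.nonempty_range_add_one
      (fun i => ‖G (y i)‖^2) with hm
    have hm0 : 0 ≤ m := by
      rw [hm]
      apply Finset.le_inf'
      intro i _
      positivity
    have hsub : ∀ i ∈ Finset.Ico (k/2) (k+1), m ≤ ‖G (y i)‖^2 := by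
      intro i hi
      exact Finset.inf'_le _ (Finset.mem_range.mpr (Finset.mem_Ico.mp hi).2)
    have hIcosum : ∑ i ∈ Finset.Ico (k/2) (k+1), bb i
        ≤ l - ∑ i ∈ Finset.range (k/2), bb i := by
      rw [Finset.sum_Ico_eq_sub _ (by omega : k/2 ≤ k+1)]
      have htb := Summable.sum_le_tsum (Finset.range (k+1)) (fun i _ => hb0 i) hsum
      rw [← hl] at htb
      linarith
    have hterm : ∀ i ∈ Finset.Ico (k/2) (k+1), ((k:ℝ)/(2*r))^2 ≤ (fistaT r (i+1))^2 := by
      intro i hi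
      have hik : k/2 ≤ i := (Finset.mem_Ico.mp hi).1
      have hcast : ((k:ℝ) - 1)/2 ≤ (i:ℝ) := by
        have h1 : k ≤ 2*i + 1 := by omega
        have h2 := (Nat.cast_le (α := ℝ)).mpr h1
        push_cast at h2
        linarith
      have h1 : (k:ℝ)/(2*r) ≤ fistaT r (i+1) := by
        rw [fistaT_succ, div_le_div_iff₀ (by positivity) hr0]
        have h3 : ((k:ℝ) - 1)/2 * r ≤ (i:ℝ) * r := mul_le_mul_of_nonneg_right hcast hr0.le
        have h4 : (0:ℝ) ≤ r * (2*r - 1) := mul_nonneg hr0.le (by linarith)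
        linarith
      have h0 : (0:ℝ) ≤ (k:ℝ)/(2*r) := by positivity
      exact pow_le_pow_left₀ h0 h1 2
    have hcard : ((k:ℝ)/2) ≤ (((Finset.Ico (k/2) (k+1)).card : ℕ) : ℝ) := by
      rw [Nat.card_Ico]
      have h1 : k ≤ 2*(k + 1 - k/2) := by omega
      have h2 := (Nat.cast_le (α := ℝ)).mpr h1
      push_cast [Nat.cast_sub (by omega : k/2 ≤ k+1)] at h2
      push_cast [Nat.cast_sub (by omega : k/2 ≤ k+1)]
      linarith
    have hsumT : (k:ℝ)^3/(8*r^2) ≤ ∑ i ∈ Finset.Ico (k/2) (k+1), (fistaT r (i+1))^2 := by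
      have hc := Finset.card_nsmul_le_sum (Finset.Ico (k/2) (k+1))
        (fun i => (fistaT r (i+1))^2) (((k:ℝ)/(2*r))^2) hterm
      rw [nsmul_eq_mul] at hc
      have expand : ((k:ℝ)/2) * ((k:ℝ)/(2*r))^2 = (k:ℝ)^3/(8*r^2) := by
        field_simp
        ring
      have hmm := mul_le_mul_of_nonneg_right hcard (by positivity : (0:ℝ) ≤ ((k:ℝ)/(2*r))^2)
      rw [expand] at hmm
      linarith
    have s1 : (k:ℝ)^3/(8*r^2) * m ≤ (∑ i ∈ Finset.Ico (k/2) (k+1), (fistaT r (i+1))^2) * m :=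
      mul_le_mul_of_nonneg_right hsumT hm0
    have s2 : (∑ i ∈ Finset.Ico (k/2) (k+1), (fistaT r (i+1))^2) * m
        ≤ ∑ i ∈ Finset.Ico (k/2) (k+1), bb i := by
      rw [Finset.sum_mul]
      apply Finset.sum_le_sum
      intro i hi
      simp only [hbb]
      exact mul_le_mul_of_nonneg_left (hsub i hi) (sq_nonneg _)
    have hmain : (k:ℝ)^3/(8*r^2) * m ≤ l - ∑ i ∈ Finset.range (k/2), bb i := by
      linarith
    rw [div_mul_eq_mul_div, div_le_iff₀ (by positivity : (0:ℝ) < 8*r^2)] at hmain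
    linarith
  have hupper : Filter.Tendsto
      (fun k : ℕ => 8*r^2 * (l - ∑ i ∈ Finset.range (k/2), bb i)) Filter.atTop (𝓝 0) := by
    have half : Filter.Tendsto (fun k : ℕ => k/2) Filter.atTop Filter.atTop :=
      Filter.tendsto_atTop_atTop.2 fun b => ⟨2*b, fun k hk => by omega⟩
    have h1 : Filter.Tendsto (fun n : ℕ => l - ∑ i ∈ Finset.range n, bb i)
        Filter.atTop (𝓝 (l - l)) := tendsto_const_nhds.sub hS
    rw [sub_self] at h1
    have h2 := (h1.comp half).const_mul (8*r^2)
    simpa [Function.comp, mul_zero] using h2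
  refine squeeze_zero (fun k => ?_) claim hupper
  apply mul_nonneg (by positivity)
  apply Finset.le_inf'
  intro i _
  positivity
end

section
/- Let Φ = f + g with f : ℝ^d → ℝ convex with L-Lipschitz gradient and g : ℝ^d → ℝ continuous convex, let x⋆ be a minimizer of Φ, let r > 2 and 0 < s ≤ 1/L. For the FISTA iterates x_k = y_{k−1} − s·G_s(y_{k−1}), y_k = x_k + ((k−1)/(k+r))(x_k − x_{k−1}) with x₀ = y₀ ∈ ℝ^d, one has lim_{k→∞} k² · ( min_{0 ≤ i ≤ k} Φ(x_i) − Φ(x⋆) ) = 0. -/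
open scoped RealInnerProductSpace Topology

variable {E : Type*} [NormedAddCommGroup E] [InnerProductSpace ℝ E] [CompleteSpace E]

lemma myLineDeriv {f : E → ℝ} {f' : E → E} (hf' : ∀ x, HasGradientAt f (f' x) x)
    (x u : E) (t : ℝ) : HasDerivAt (fun t : ℝ => f (x + t • u)) ⟪f' (x + t • u), u⟫ t := by
  have hc : HasDerivAt (fun t : ℝ => x + t • u) u t := by
    simpa using ((hasDerivAt_id t).smul_const u).const_add x
  have := ((hf' (x + t • u)).hasFDerivAt).comp_hasDerivAt t hc
  simpa [InnerProductSpace.toDual_apply_apply, Function.comp_def] using this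

lemma myConvexGrad {f : E → ℝ} {f' : E → E} (hfconv : ConvexOn ℝ Set.univ f)
    (hf' : ∀ x, HasGradientAt f (f' x) x) (x z : E) :
    f x + ⟪f' x, z - x⟫ ≤ f z := by
  set φ : ℝ → ℝ := fun t => f (x + t • (z - x)) with hφ
  have hder : HasDerivAt φ ⟪f' x, z - x⟫ 0 := by
    simpa using myLineDeriv hf' x (z - x) 0
  have hslope : ∀ t ∈ Set.Ioc (0:ℝ) 1, slope φ 0 t ≤ f z - f x := by
    intro t ht
    have h1 : φ t ≤ (1 - t) * φ 0 + t * φ 1 := by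
      have := hfconv.2 (Set.mem_univ x) (Set.mem_univ z) (by linarith [ht.2] : (0:ℝ) ≤ 1 - t)
        (le_of_lt ht.1) (by ring)
      have he : (1 - t) • x + t • z = x + t • (z - x) := by
        simp [smul_sub, sub_smul]; abel
      simpa [hφ, he, smul_eq_mul] using this
    have h0 : φ 0 = f x := by simp [hφ]
    have h1' : φ 1 = f z := by simp [hφ]
    rw [slope_def_field, sub_zero, div_le_iff₀ ht.1]
    rw [h0, h1'] at h1
    nlinarith [h1]
  have htend : Filter.Tendsto (slope φ 0) (𝓝[>] 0) (𝓝 ⟪f' x, z - x⟫) :=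
    (hasDerivAt_iff_tendsto_slope.mp hder).mono_left
      (nhdsWithin_mono _ (fun t ht => ne_of_gt ht))
  have : ⟪f' x, z - x⟫ ≤ f z - f x := by
    refine le_of_tendsto htend ?_
    filter_upwards [Ioc_mem_nhdsGT_of_mem (Set.mem_Ico.2 ⟨le_refl 0, one_pos⟩)] with t ht
    exact hslope t ht
  linarith

lemma myDescent {f : E → ℝ} {f' : E → E} {L : ℝ}
    (hf' : ∀ x, HasGradientAt f (f' x) x)
    (hlip : ∀ x y, ‖f' x - f' y‖ ≤ L * ‖x - y‖) (x z : E) :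
    f z ≤ f x + ⟪f' x, z - x⟫ + L / 2 * ‖z - x‖ ^ 2 := by
  set u := z - x with hu
  set ψ : ℝ → ℝ := fun t => f (x + t • u) - t * ⟪f' x, u⟫ - t ^ 2 * (L / 2 * ‖u‖ ^ 2) with hψ
  have hder : ∀ t : ℝ, HasDerivAt ψ
      (⟪f' (x + t • u), u⟫ - ⟪f' x, u⟫ - 2 * t * (L / 2 * ‖u‖ ^ 2)) t := by
    intro t
    have h1 := myLineDeriv hf' x u t
    have h2 : HasDerivAt (fun t : ℝ => t * ⟪f' x, u⟫) ⟪f' x, u⟫ t := by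
      simpa using (hasDerivAt_id t).mul_const ⟪f' x, u⟫
    have h3 : HasDerivAt (fun t : ℝ => t ^ 2 * (L / 2 * ‖u‖ ^ 2))
        (2 * t * (L / 2 * ‖u‖ ^ 2)) t := by
      simpa using (hasDerivAt_pow 2 t).mul_const (L / 2 * ‖u‖ ^ 2)
    exact (h1.sub h2).sub h3
  have hanti : AntitoneOn ψ (Set.Icc 0 1) := by
    apply antitoneOn_of_deriv_nonpos (convex_Icc 0 1)
    · exact Continuous.continuousOn (by
        have : Differentiable ℝ ψ := fun t => (hder t).differentiableAt
        exact this.continuous)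
    · exact fun t _ => ((hder t).differentiableAt).differentiableWithinAt
    · intro t ht
      rw [interior_Icc] at ht
      rw [(hder t).deriv]
      have hcs : ⟪f' (x + t • u) - f' x, u⟫ ≤ ‖f' (x + t • u) - f' x‖ * ‖u‖ :=
        real_inner_le_norm _ _
      have hl : ‖f' (x + t • u) - f' x‖ ≤ L * ‖t • u‖ := by
        simpa using hlip (x + t • u) x
      have hn : ‖t • u‖ = t * ‖u‖ := by
        rw [norm_smul, Real.norm_eq_abs, abs_of_pos ht.1]
      have h5 : ⟪f' (x + t • u), u⟫ - ⟪f' x, u⟫ = ⟪f' (x + t • u) - f' x, u⟫ := by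
        rw [inner_sub_left]
      rw [hn] at hl
      nlinarith [mul_le_mul_of_nonneg_right hl (norm_nonneg u), hcs, h5, sq_nonneg ‖u‖]
  have := hanti (Set.mem_Icc.2 ⟨le_refl 0, zero_le_one⟩)
      (Set.mem_Icc.2 ⟨zero_le_one, le_refl 1⟩) zero_le_one
  simp only [hψ] at this
  simp only [zero_smul, add_zero, one_smul, zero_mul, sub_zero, one_pow, one_mul] at this
  have hz : x + u = z := by rw [hu]; abel
  rw [hz] at this
  linarith

lemma myProxSubgrad {g : E → ℝ} {s : ℝ} (hs : 0 < s) (hgconv : ConvexOn ℝ Set.univ g)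
    {v p : E} (hmin : IsMinOn (fun w => 1 / (2 * s) * ‖w - v‖ ^ 2 + g w) Set.univ p) (z : E) :
    g p + 1 / s * ⟪v - p, z - p⟫ ≤ g z := by
  set A : ℝ := g z - g p + 1 / s * ⟪p - v, z - p⟫ with hA
  set B : ℝ := ‖z - p‖ ^ 2 / (2 * s) with hB
  have hs' : s ≠ 0 := ne_of_gt hs
  have key : ∀ t : ℝ, t ∈ Set.Ioc (0:ℝ) 1 → 0 ≤ A + t * B := by
    intro t ht
    have hmem := hmin (Set.mem_univ (p + t • (z - p)))
    simp only [Set.mem_setOf_eq] at hmem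
    have hnorm : ‖p + t • (z - p) - v‖ ^ 2
        = ‖p - v‖ ^ 2 + 2 * (t * ⟪p - v, z - p⟫) + t ^ 2 * ‖z - p‖ ^ 2 := by
      have : p + t • (z - p) - v = (p - v) + t • (z - p) := by abel
      rw [this, norm_add_sq_real, real_inner_smul_right, norm_smul, Real.norm_eq_abs,
        abs_of_pos ht.1, mul_pow]
    have hgc : g (p + t • (z - p)) ≤ (1 - t) * g p + t * g z := by
      have := hgconv.2 (Set.mem_univ p) (Set.mem_univ z)
        (by linarith [ht.2] : (0:ℝ) ≤ 1 - t) (le_of_lt ht.1) (by ring)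
      have he : (1 - t) • p + t • z = p + t • (z - p) := by
        simp [smul_sub, sub_smul]; abel
      simpa [he, smul_eq_mul] using this
    rw [hnorm] at hmem
    have h0 : 0 ≤ 1 / (2 * s) * (2 * (t * ⟪p - v, z - p⟫) + t ^ 2 * ‖z - p‖ ^ 2)
        + t * (g z - g p) := by nlinarith [hmem, hgc]
    have heq : t * (A + t * B) = 1 / (2 * s) * (2 * (t * ⟪p - v, z - p⟫)
        + t ^ 2 * ‖z - p‖ ^ 2) + t * (g z - g p) := by
      rw [hA, hB]; field_simp; ring
    have hineq : 0 ≤ t * (A + t * B) := heq ▸ h0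
    by_contra h
    push_neg at h
    nlinarith [ht.1]
  have htend : Filter.Tendsto (fun t : ℝ => A + t * B) (𝓝[>] 0) (𝓝 A) := by
    have : Filter.Tendsto (fun t : ℝ => A + t * B) (𝓝 0) (𝓝 (A + 0 * B)) :=
      (continuous_const.add (continuous_id.mul continuous_const)).tendsto 0
    simpa using this.mono_left nhdsWithin_le_nhds
  have hA0 : 0 ≤ A := by
    refine ge_of_tendsto htend ?_
    filter_upwards [Ioc_mem_nhdsGT_of_mem (Set.mem_Ico.2 ⟨le_refl 0, one_pos⟩)] with t ht
    exact key t ht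
  have hio : ⟪v - p, z - p⟫ = -⟪p - v, z - p⟫ := by
    rw [← inner_neg_left]; congr 1; abel
  rw [hA] at hA0
  rw [hio]
  linarith

lemma myFund {f g : E → ℝ} {f' : E → E} {L s : ℝ} (hL : 0 < L) (hs : 0 < s) (hsL : s ≤ 1 / L)
    (hfconv : ConvexOn ℝ Set.univ f)
    (hf' : ∀ x, HasGradientAt f (f' x) x)
    (hlip : ∀ x y, ‖f' x - f' y‖ ≤ L * ‖x - y‖)
    (hgconv : ConvexOn ℝ Set.univ g)
    {Φ : E → ℝ} (hΦ : ∀ x, Φ x = f x + g x)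
    {P : E → E}
    (hP : ∀ x, IsMinOn (fun z => 1 / (2 * s) * ‖z - (x - s • f' x)‖ ^ 2 + g z) Set.univ (P x))
    {G : E → E} (hG : ∀ x, G x = s⁻¹ • (x - P x)) (w z : E) :
    Φ (P w) ≤ Φ z + ⟪G w, w - z⟫ - s / 2 * ‖G w‖ ^ 2 := by
  have hs0 : s ≠ 0 := ne_of_gt hs
  have hLs : L ≤ s⁻¹ := by
    have h1 : s * L ≤ 1 := (le_div_iff₀ hL).mp hsL
    rw [← one_div, le_div_iff₀ hs]
    nlinarith [h1]
  have hB := myDescent hf' hlip w (P w)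
  have hBs : f (P w) ≤ f w + ⟪f' w, P w - w⟫ + s⁻¹ / 2 * ‖w - P w‖ ^ 2 := by
    rw [show ‖P w - w‖ = ‖w - P w‖ from norm_sub_rev _ _] at hB
    nlinarith [hB, mul_le_mul_of_nonneg_right hLs (sq_nonneg ‖w - P w‖)]
  have hC := myProxSubgrad hs hgconv (hP w) z
  rw [show (w - s • f' w) - P w = (w - P w) - s • f' w from by abel,
    inner_sub_left, real_inner_smul_left] at hC
  rw [show 1 / s * (⟪w - P w, z - P w⟫ - s * ⟪f' w, z - P w⟫)
      = s⁻¹ * ⟪w - P w, z - P w⟫ - ⟪f' w, z - P w⟫ from by field_simp] at hC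
  have hA' := myConvexGrad hfconv hf' w z
  have e3 : ⟪f' w, P w - w⟫ + ⟪f' w, z - P w⟫ = ⟪f' w, z - w⟫ := by
    rw [← inner_add_right]
    congr 1
    abel
  rw [hΦ, hΦ, hG, real_inner_smul_left,
    show w - z = (w - P w) - (z - P w) from by abel, inner_sub_right,
    real_inner_self_eq_norm_sq,
    show ‖s⁻¹ • (w - P w)‖ ^ 2 = s⁻¹ ^ 2 * ‖w - P w‖ ^ 2 from by
      rw [norm_smul, Real.norm_eq_abs, abs_of_pos (inv_pos.mpr hs), mul_pow],
    show s / 2 * (s⁻¹ ^ 2 * ‖w - P w‖ ^ 2) = s⁻¹ / 2 * ‖w - P w‖ ^ 2 from by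
      field_simp]
  have e7 : s⁻¹ * (‖w - P w‖ ^ 2 - ⟪w - P w, z - P w⟫)
      = s⁻¹ * ‖w - P w‖ ^ 2 - s⁻¹ * ⟪w - P w, z - P w⟫ := mul_sub _ _ _
  linarith [hBs, hC, hA', e3, e7]

set_option maxHeartbeats 2000000 in
/-- **FISTA little-o rate of objective values for `r > 2`.** For step size `0 < s ≤ 1/L`,
`lim_{k→∞} k²·(min_{0 ≤ i ≤ k} Φ(x_i) − Φ(x⋆)) = 0`. -/
theorem fista_objective_little_o {d : ℕ}
    (f g : EuclideanSpace ℝ (Fin d) → ℝ)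
    (f' : EuclideanSpace ℝ (Fin d) → EuclideanSpace ℝ (Fin d))
    (L s r : ℝ) (hL : 0 < L) (hs : 0 < s) (hr : 2 ≤ r)
    (hfconv : ConvexOn ℝ Set.univ f)
    (hf' : ∀ x, HasGradientAt f (f' x) x)
    (hlip : ∀ x y, ‖f' x - f' y‖ ≤ L * ‖x - y‖)
    (hgconv : ConvexOn ℝ Set.univ g) (hgcont : Continuous g)
    (Φ : EuclideanSpace ℝ (Fin d) → ℝ) (hΦ : ∀ x, Φ x = f x + g x)
    (P : EuclideanSpace ℝ (Fin d) → EuclideanSpace ℝ (Fin d))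
    (hP : ∀ x, IsMinOn (fun z => 1 / (2 * s) * ‖z - (x - s • f' x)‖ ^ 2 + g z) Set.univ (P x))
    (G : EuclideanSpace ℝ (Fin d) → EuclideanSpace ℝ (Fin d))
    (hG : ∀ x, G x = s⁻¹ • (x - P x))
    (xstar : EuclideanSpace ℝ (Fin d)) (hstar : IsMinOn Φ Set.univ xstar)
    (x y : ℕ → EuclideanSpace ℝ (Fin d)) (hxy0 : x 0 = y 0)
    (hx : ∀ k : ℕ, x (k + 1) = y k - s • G (y k))
    (hy : ∀ k : ℕ, y (k + 1) =
      x (k + 1) + ((((k : ℝ) + 1) - 1) / (((k : ℝ) + 1) + r)) • (x (k + 1) - x k))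
    (hrgt : 2 < r) (hsL : s ≤ 1 / L) :
    Filter.Tendsto
      (fun k : ℕ => (k : ℝ) ^ 2 *
        (Finset.inf' (Finset.range (k + 1)) Finset.nonempty_range_add_one
          (fun i => Φ (x i)) - Φ xstar))
      Filter.atTop (𝓝 0) := by
  have hr0 : (0:ℝ) < r := by linarith
  have hr2 : (0:ℝ) < r - 2 := by linarith
  have hs0 : s ≠ 0 := ne_of_gt hs
  obtain ⟨t, ht⟩ : ∃ t : ℕ → ℝ, ∀ k, t k = ((k:ℝ) + r) / r := ⟨_, fun _ => rfl⟩
  obtain ⟨δ, hδdef⟩ : ∃ δ : ℕ → ℝ, ∀ k, δ k = Φ (x k) - Φ xstar := ⟨_, fun _ => rfl⟩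
  obtain ⟨z, hzdef⟩ : ∃ z : ℕ → EuclideanSpace ℝ (Fin d),
      ∀ k, z k = t k • y k - (t k - 1) • x k - xstar := ⟨_, fun _ => rfl⟩
  have hδ0 : ∀ k, 0 ≤ δ k := fun k => (hδdef k) ▸ sub_nonneg.mpr (hstar (Set.mem_univ (x k)))
  have htk1 : ∀ k, 1 ≤ t k := by
    intro k
    rw [ht k, le_div_iff₀ hr0]
    push_cast
    nlinarith [Nat.cast_nonneg (α := ℝ) k]
  have hPx : ∀ k, x (k + 1) = P (y k) := by
    intro k
    rw [hx, hG, smul_smul, mul_inv_cancel₀ hs0, one_smul, sub_sub_cancel]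
  -- recursion for z
  have hzrec : ∀ k, z (k + 1) = z k - (s * t k) • G (y k) := by
    intro k
    have hk1r : ((k:ℝ) + 1 + r) ≠ 0 := by positivity
    have hrne : r ≠ 0 := ne_of_gt hr0
    simp only [hzdef, ht, hy k, hx k]
    push_cast
    match_scalars <;> field_simp <;> ring
  -- per-step Lyapunov inequality
  have key : ∀ k, t k ^ 2 * δ (k + 1) + ‖z (k + 1)‖ ^ 2 / (2 * s)
      ≤ t k * (t k - 1) * δ k + ‖z k‖ ^ 2 / (2 * s) := by
    intro k
    have h1 : δ (k + 1) ≤ δ k + ⟪G (y k), y k - x k⟫ - s / 2 * ‖G (y k)‖ ^ 2 := by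
      have := myFund hL hs hsL hfconv hf' hlip hgconv hΦ hP hG (y k) (x k)
      rw [← hPx k] at this
      simp only [hδdef]
      linarith
    have h2 : δ (k + 1) ≤ ⟪G (y k), y k - xstar⟫ - s / 2 * ‖G (y k)‖ ^ 2 := by
      have := myFund hL hs hsL hfconv hf' hlip hgconv hΦ hP hG (y k) xstar
      rw [← hPx k] at this
      simp only [hδdef]
      linarith
    have hT0 : (0:ℝ) ≤ t k := le_trans zero_le_one (htk1 k)
    have hT1 : (0:ℝ) ≤ t k - 1 := by linarith [htk1 k]
    have hw : ⟪z k, G (y k)⟫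
        = (t k - 1) * ⟪G (y k), y k - x k⟫ + ⟪G (y k), y k - xstar⟫ := by
      rw [real_inner_comm]
      simp only [hzdef, inner_sub_right, real_inner_smul_right]
      ring
    have hZ : ‖z (k + 1)‖ ^ 2 = ‖z k‖ ^ 2 - 2 * ((s * t k) * ⟪z k, G (y k)⟫)
        + (s * t k) ^ 2 * ‖G (y k)‖ ^ 2 := by
      rw [hzrec k, norm_sub_sq_real, real_inner_smul_right, norm_smul,
        Real.norm_eq_abs, abs_of_nonneg (mul_nonneg (le_of_lt hs) hT0), mul_pow]
    rw [hw] at hZ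
    have hZdiv : ‖z (k + 1)‖ ^ 2 / (2 * s) = ‖z k‖ ^ 2 / (2 * s)
        - t k * ((t k - 1) * ⟪G (y k), y k - x k⟫ + ⟪G (y k), y k - xstar⟫)
        + s * t k ^ 2 / 2 * ‖G (y k)‖ ^ 2 := by
      rw [hZ]
      field_simp
    have p1 := mul_le_mul_of_nonneg_left h1 (mul_nonneg hT0 hT1)
    have p2 := mul_le_mul_of_nonneg_left h2 hT0
    nlinarith [p1, p2, hZdiv]
  -- telescoping
  obtain ⟨b, hbdef⟩ : ∃ b : ℕ → ℝ,
      ∀ k, b k = t k ^ 2 * δ (k + 1) + ‖z (k + 1)‖ ^ 2 / (2 * s) := ⟨_, fun _ => rfl⟩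
  obtain ⟨m, hmdef⟩ : ∃ m : ℕ → ℝ,
      ∀ j, m j = ((j:ℝ) * (r - 2) + (r - 1) ^ 2) / r ^ 2 := ⟨_, fun _ => rfl⟩
  have hrne : r ≠ 0 := ne_of_gt hr0
  have hstep : ∀ k, b (k + 1) + m (k + 1) * δ (k + 1) ≤ b k := by
    intro k
    have hk := key (k + 1)
    have hco : t (k + 1) * (t (k + 1) - 1) = t k ^ 2 - m (k + 1) := by
      simp only [ht, hmdef]
      push_cast
      field_simp
      ring
    simp only [hbdef]
    calc t (k + 1) ^ 2 * δ (k + 1 + 1) + ‖z (k + 1 + 1)‖ ^ 2 / (2 * s) + m (k + 1) * δ (k + 1)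
        ≤ t (k + 1) * (t (k + 1) - 1) * δ (k + 1) + ‖z (k + 1)‖ ^ 2 / (2 * s)
          + m (k + 1) * δ (k + 1) := by linarith [hk]
      _ = t k ^ 2 * δ (k + 1) + ‖z (k + 1)‖ ^ 2 / (2 * s) := by rw [hco]; ring
  have hb0 : ∀ k, 0 ≤ b k := by
    intro k
    simp only [hbdef]
    have h1 : 0 ≤ t k ^ 2 * δ (k + 1) := mul_nonneg (sq_nonneg _) (hδ0 _)
    have h2 : 0 ≤ ‖z (k + 1)‖ ^ 2 / (2 * s) := by positivity
    linarith
  have htel : ∀ n, b n + ∑ j ∈ Finset.range n, m (j + 1) * δ (j + 1) ≤ b 0 := by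
    intro n
    induction n with
    | zero => simp
    | succ n ih =>
      rw [Finset.sum_range_succ]
      linarith [hstep n, ih]
  have hmm : ∀ j : ℕ, ((j:ℝ) + 1) * δ (j + 1) ≤ (r ^ 2 / (r - 2)) * (m (j + 1) * δ (j + 1)) := by
    intro j
    have hKm : ((j:ℝ) + 1) ≤ r ^ 2 / (r - 2) * m (j + 1) := by
      simp only [hmdef]
      push_cast
      rw [div_mul_div_comm, le_div_iff₀ (show (0:ℝ) < (r - 2) * r ^ 2 by positivity)]
      nlinarith [sq_nonneg (r - 1), Nat.cast_nonneg (α := ℝ) j, hr2, hr0]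
    have := mul_le_mul_of_nonneg_right hKm (hδ0 (j + 1))
    linarith [this]
  have hsumbd : ∀ n, ∑ j ∈ Finset.range n, ((j:ℝ) + 1) * δ (j + 1)
      ≤ r ^ 2 / (r - 2) * b 0 := by
    intro n
    calc ∑ j ∈ Finset.range n, ((j:ℝ) + 1) * δ (j + 1)
        ≤ ∑ j ∈ Finset.range n, (r ^ 2 / (r - 2)) * (m (j + 1) * δ (j + 1)) :=
          Finset.sum_le_sum fun j _ => hmm j
      _ = r ^ 2 / (r - 2) * ∑ j ∈ Finset.range n, m (j + 1) * δ (j + 1) := by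
          rw [Finset.mul_sum]
      _ ≤ r ^ 2 / (r - 2) * b 0 := by
          have hK0 : 0 ≤ r ^ 2 / (r - 2) := by positivity
          have := htel n
          have hb := hb0 n
          have : ∑ j ∈ Finset.range n, m (j + 1) * δ (j + 1) ≤ b 0 := by linarith
          exact mul_le_mul_of_nonneg_left this hK0
  have hsumm : Summable (fun j : ℕ => (j:ℝ) * δ j) := by
    rw [← summable_nat_add_iff 1]
    apply summable_of_sum_range_le (c := r ^ 2 / (r - 2) * b 0)
    · intro j
      push_cast
      exact mul_nonneg (by positivity) (hδ0 (j + 1))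
    · intro n
      have := hsumbd n
      convert this using 2 with j
      push_cast
      ring
  -- final squeeze
  obtain ⟨M, hMdef⟩ : ∃ M : ℕ → ℝ, ∀ k, M k =
      Finset.inf' (Finset.range (k + 1)) Finset.nonempty_range_add_one (fun i => Φ (x i))
        - Φ xstar := ⟨_, fun _ => rfl⟩
  have hM0 : ∀ k, 0 ≤ M k := by
    intro k
    rw [hMdef k, sub_nonneg]
    exact Finset.le_inf' _ _ fun i _ => hstar (Set.mem_univ (x i))
  have hMle : ∀ k i, i ∈ Finset.range (k + 1) → M k ≤ δ i := by
    intro k i hi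
    rw [hMdef k, hδdef i]
    exact sub_le_sub_right (Finset.inf'_le _ hi) _
  obtain ⟨T, hTdef⟩ : ∃ T : ℕ → ℝ,
      ∀ k, T k = ∑ j ∈ Finset.Ico (k / 2 + 1) (k + 1), (j:ℝ) * δ j := ⟨_, fun _ => rfl⟩
  have hbound : ∀ k : ℕ, (k:ℝ) ^ 2 * M k ≤ 4 * T k := by
    intro k
    have hlow : ∀ j ∈ Finset.Ico (k / 2 + 1) (k + 1), (k:ℝ) / 2 * M k ≤ (j:ℝ) * δ j := by
      intro j hj
      rw [Finset.mem_Ico] at hj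
      have hj1 : (k:ℝ) / 2 ≤ (j:ℝ) := by
        have h2j : k ≤ 2 * j := by omega
        have := (Nat.cast_le (α := ℝ)).mpr h2j
        push_cast at this
        linarith
      have hδj : M k ≤ δ j := hMle k j (Finset.mem_range.mpr (by omega))
      exact mul_le_mul hj1 hδj (hM0 k) (Nat.cast_nonneg j)
    have hsum := Finset.card_nsmul_le_sum (Finset.Ico (k / 2 + 1) (k + 1)) _ _ hlow
    rw [Nat.card_Ico, nsmul_eq_mul] at hsum
    simp only [Nat.add_sub_add_right] at hsum
    have hc : (k:ℝ) / 2 ≤ ((k - k / 2 : ℕ) : ℝ) := by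
      have h2 : k ≤ 2 * (k - k / 2) := by omega
      have h3 := (Nat.cast_le (α := ℝ)).mpr h2
      push_cast at h3
      linarith
    have h4 : (k:ℝ) / 2 * ((k:ℝ) / 2 * M k) ≤ ((k - k / 2 : ℕ) : ℝ)
        * ((k:ℝ) / 2 * M k) :=
      mul_le_mul_of_nonneg_right hc (mul_nonneg (by positivity) (hM0 k))
    rw [hTdef k]
    nlinarith [hsum, h4]
  have htail : Filter.Tendsto T Filter.atTop (𝓝 0) := by
    have hS := hsumm.hasSum.tendsto_sum_nat
    have h1 : Filter.Tendsto (fun k : ℕ => k + 1) Filter.atTop Filter.atTop :=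
      Filter.tendsto_add_atTop_nat 1
    have h2 : Filter.Tendsto (fun k : ℕ => k / 2 + 1) Filter.atTop Filter.atTop := by
      apply Filter.tendsto_atTop_atTop_of_monotone
      · exact fun a b hab => Nat.add_le_add_right (Nat.div_le_div_right hab) 1
      · intro c
        exact ⟨2 * c, by omega⟩
    have hcomp := (hS.comp h1).sub (hS.comp h2)
    rw [sub_self] at hcomp
    apply hcomp.congr
    intro k
    rw [hTdef k, Finset.sum_Ico_eq_sub _ (by omega : k / 2 + 1 ≤ k + 1)]
    rfl
  simp only [← hMdef]
  apply squeeze_zero (fun k => mul_nonneg (sq_nonneg _) (hM0 k)) hbound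
  simpa using htail.const_mul (4:ℝ)
end
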